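/- arXiv:1309.3696 — 5 statements merged into one kernel-verified Lean document; each statement's English description precedes it below -/
import Mathlib

section
/- Let P be a finite point set in ℝ² and let a,b,a',b' ∈ P be points with D(a,b) ∩ P = {a,b}, D(a',b') ∩ P = {a',b'}, x(a') < x(a) ≤ x(b') < x(b), and y(a) < y(a') ≤ y(b) < y(b') (so D(a,b) and D(a',b') have a corner intersection). Then D(a,b') ∩ P = {a,b'}, D(a',b) ∩ P = {a',b}, and D(a,b') pierces D(a',b). -/
open Set

/-- Points of the plane. -/
abbrev Pt : Type := ℝ × ℝ

/-- `D a b` is the closed axis-aligned rectangle having the segment from `a` to `b`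
as a diagonal, i.e. the minimum enclosing axis-aligned rectangle of `a` and `b`. -/
def D (a b : Pt) : Set Pt :=
  Set.Icc (min a.1 b.1) (max a.1 b.1) ×ˢ Set.Icc (min a.2 b.2) (max a.2 b.2)

/-- `Pierces R₂ R₁` : the projection of `R₁` onto the x-axis contains that of `R₂`,
and the projection of `R₂` onto the y-axis contains that of `R₁`. -/
def Pierces (R₂ R₁ : Set Pt) : Prop :=
  Prod.fst '' R₂ ⊆ Prod.fst '' R₁ ∧ Prod.snd '' R₁ ⊆ Prod.snd '' R₂

/-- Two rectangles have a piercing intersection if one of them pierces the other. -/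
def PiercingInter (A B : Set Pt) : Prop := Pierces A B ∨ Pierces B A

/-- The four corner points of an axis-aligned rectangle given as a set. -/
def corners (A : Set Pt) : Set Pt :=
  {c | (c.1 = sInf (Prod.fst '' A) ∨ c.1 = sSup (Prod.fst '' A)) ∧
       (c.2 = sInf (Prod.snd '' A) ∨ c.2 = sSup (Prod.snd '' A))}

/-- `A` and `B` have a corner intersection (w.r.t. the point set `P`):
each rectangle contains exactly one of the corner points of the other,
and these two contained corners are not elements of `P`. -/
def CornerInter (P : Set Pt) (A B : Set Pt) : Prop :=
  (∃! c, c ∈ corners B ∧ c ∈ A) ∧ (∃! c, c ∈ corners A ∧ c ∈ B) ∧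
  ∀ c, ((c ∈ corners B ∧ c ∈ A) ∨ (c ∈ corners A ∧ c ∈ B)) → c ∉ P

/-- `A` and `B` have a point intersection: their intersection is precisely
a single point of `P`. -/
def PointInter (P : Set Pt) (A B : Set Pt) : Prop := ∃ s ∈ P, A ∩ B = {s}

/-- `A` is a rectangle on the point set `P`. -/
def IsRectOn (P : Set Pt) (A : Set Pt) : Prop :=
  ∃ a b, a ∈ P ∧ b ∈ P ∧ a ≠ b ∧ A = D a b ∧ A ∩ P = {a, b}

/-- A complete set of rectangles on `P`: for every two elements `D a b`, `D a' b'`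
of `H` that have a corner intersection, the other two rectangles of the form
`D p q` (with `p ∈ {a,a'}`, `q ∈ {b,b'}`) having a piercing intersection with
each other also belong to `H`. -/
def CompleteOn (P : Set Pt) (H : Set (Set Pt)) : Prop :=
  (∀ A ∈ H, IsRectOn P A) ∧
  ∀ a b a' b' : Pt, a ∈ P → b ∈ P → a' ∈ P → b' ∈ P →
    D a b ∈ H → D a' b' ∈ H → CornerInter P (D a b) (D a' b') →
    PiercingInter (D a b') (D a' b) →
    D a b' ∈ H ∧ D a' b ∈ H

/-- Adjacency in the graph `G_{p,c}(H)` : a piercing or a corner intersection. -/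
def AdjPC (P : Set Pt) (A B : Set Pt) : Prop := PiercingInter A B ∨ CornerInter P A B

/-- `I` is an independent set of the graph `G_{p,c}(H)`. -/
def IndepPC (P : Set Pt) (H I : Set (Set Pt)) : Prop :=
  I ⊆ H ∧ I.Pairwise fun A B => ¬ AdjPC P A B

/-- The maximum size of an independent set of the graph `G_{p,c}(H)`. -/
noncomputable def maxIndepPC (P : Set Pt) (H : Set (Set Pt)) : ℕ :=
  sSup {n | ∃ I, IndepPC P H I ∧ I.ncard = n}

lemma memD' {p u v : Pt} (hx : u.1 ≤ v.1) (hy : u.2 ≤ v.2) :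
    p ∈ D u v ↔ u.1 ≤ p.1 ∧ p.1 ≤ v.1 ∧ u.2 ≤ p.2 ∧ p.2 ≤ v.2 := by
  simp only [D, Set.mem_prod, Set.mem_Icc, min_eq_left hx, max_eq_right hx,
    min_eq_left hy, max_eq_right hy]
  tauto

lemma fstD {u v : Pt} (hx : u.1 ≤ v.1) : Prod.fst '' D u v = Set.Icc u.1 v.1 := by
  rw [D, Set.fst_image_prod _ (Set.nonempty_Icc.2 min_le_max),
    min_eq_left hx, max_eq_right hx]

lemma sndD {u v : Pt} (hy : u.2 ≤ v.2) : Prod.snd '' D u v = Set.Icc u.2 v.2 := by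
  rw [D, Set.snd_image_prod (Set.nonempty_Icc.2 min_le_max),
    min_eq_left hy, max_eq_right hy]

/-- For a corner-intersecting configuration of rectangles
`D a b` and `D a' b'` on `P`, the rectangles `D a b'` and `D a' b` also contain
exactly two points of `P`, and `D a b'` pierces `D a' b`. -/
theorem stmt3 (P : Set Pt) (hPfin : P.Finite) (a b a' b' : Pt)
    (ha : a ∈ P) (hb : b ∈ P) (ha' : a' ∈ P) (hb' : b' ∈ P)
    (hab : D a b ∩ P = {a, b}) (hab' : D a' b' ∩ P = {a', b'})
    (hx1 : a'.1 < a.1) (hx2 : a.1 ≤ b'.1) (hx3 : b'.1 < b.1)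
    (hy1 : a.2 < a'.2) (hy2 : a'.2 ≤ b.2) (hy3 : b.2 < b'.2) :
    D a b' ∩ P = {a, b'} ∧ D a' b ∩ P = {a', b} ∧ Pierces (D a b') (D a' b) := by
  have mab : ∀ p : Pt, p ∈ D a b ↔ _ := fun p => memD' (by linarith) (by linarith)
  have mab' : ∀ p : Pt, p ∈ D a' b' ↔ _ := fun p => memD' (by linarith) (by linarith)
  have m1 : ∀ p : Pt, p ∈ D a b' ↔ _ := fun p => memD' (by linarith) (by linarith)
  have m2 : ∀ p : Pt, p ∈ D a' b ↔ _ := fun p => memD' (by linarith) (by linarith)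
  have h1 : D a b' ∩ P = {a, b'} := by
    ext p
    simp only [Set.mem_inter_iff, Set.mem_insert_iff, Set.mem_singleton_iff, m1]
    constructor
    · rintro ⟨⟨h₁, h₂, h₃, h₄⟩, hpP⟩
      by_cases hyb : p.2 ≤ b.2
      · have : p ∈ D a b ∩ P := ⟨(mab p).2 ⟨by linarith, by linarith, by linarith, by linarith⟩, hpP⟩
        rw [hab] at this
        rcases this with h | h
        · exact Or.inl h
        · exfalso; rw [Set.mem_singleton_iff] at h; rw [h] at h₂; linarith
      · push_neg at hyb
        have : p ∈ D a' b' ∩ P := ⟨(mab' p).2 ⟨by linarith, by linarith, by linarith, by linarith⟩, hpP⟩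
        rw [hab'] at this
        rcases this with h | h
        · exfalso; rw [h] at hyb; linarith
        · exact Or.inr h
    · rintro (rfl | rfl)
      · exact ⟨⟨le_refl _, by linarith, le_refl _, by linarith⟩, ha⟩
      · exact ⟨⟨by linarith, le_refl _, by linarith, le_refl _⟩, hb'⟩
  have h2 : D a' b ∩ P = {a', b} := by
    ext p
    simp only [Set.mem_inter_iff, Set.mem_insert_iff, Set.mem_singleton_iff, m2]
    constructor
    · rintro ⟨⟨h₁, h₂, h₃, h₄⟩, hpP⟩
      by_cases hxa : a.1 ≤ p.1
      · have : p ∈ D a b ∩ P := ⟨(mab p).2 ⟨by linarith, by linarith, by linarith, by linarith⟩, hpP⟩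
        rw [hab] at this
        rcases this with h | h
        · exfalso; rw [h] at h₃; linarith
        · exact Or.inr h
      · push_neg at hxa
        have : p ∈ D a' b' ∩ P := ⟨(mab' p).2 ⟨by linarith, by linarith, by linarith, by linarith⟩, hpP⟩
        rw [hab'] at this
        rcases this with h | h
        · exact Or.inl h
        · exfalso; rw [Set.mem_singleton_iff] at h; rw [h] at hxa; linarith
    · rintro (rfl | rfl)
      · exact ⟨⟨le_refl _, by linarith, le_refl _, by linarith⟩, ha'⟩
      · exact ⟨⟨by linarith, le_refl _, by linarith, le_refl _⟩, hb⟩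
  refine ⟨h1, h2, ?_, ?_⟩
  · rw [fstD (by linarith : a.1 ≤ b'.1), fstD (by linarith : a'.1 ≤ b.1)]
    exact Set.Icc_subset_Icc (by linarith) (by linarith)
  · rw [sndD (by linarith : a'.2 ≤ b.2), sndD (by linarith : a.2 ≤ b'.2)]
    exact Set.Icc_subset_Icc (by linarith) (by linarith)
end

section
/- Let S = R ∪ B be a two-colored finite point set in ℝ². If D is a blue rectangle of the family R₁ and D' is a red rectangle of the family R₁ and D ∩ D' ≠ ∅, then D and D' have a piercing intersection. -/
open Set

/-- The family `𝓡(S)` of monochromatic rectangles of the two-colored point set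
`S = R ∪ B`: rectangles `D p q` with `p,q` distinct points of the same color
containing no point of `S` other than `p` and `q`. -/
def RS (R B : Set Pt) : Set (Set Pt) :=
  {A | ∃ p q, ((p ∈ R ∧ q ∈ R) ∨ (p ∈ B ∧ q ∈ B)) ∧ p ≠ q ∧ A = D p q ∧
    A ∩ (R ∪ B) = {p, q}}

/-- The blue rectangles of `𝓡(S)` having a point of `S` at their bottom-left corner. -/
def Fam1Blue (R B : Set Pt) : Set (Set Pt) :=
  {A | ∃ p q, p ∈ B ∧ q ∈ B ∧ p ≠ q ∧ A = D p q ∧ A ∩ (R ∪ B) = {p, q} ∧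
    (min p.1 q.1, min p.2 q.2) ∈ R ∪ B}

/-- The red rectangles of `𝓡(S)` having a point of `S` at their bottom-right corner. -/
def Fam1Red (R B : Set Pt) : Set (Set Pt) :=
  {A | ∃ p q, p ∈ R ∧ q ∈ R ∧ p ≠ q ∧ A = D p q ∧ A ∩ (R ∪ B) = {p, q} ∧
    (max p.1 q.1, min p.2 q.2) ∈ R ∪ B}

/-- The family `𝓡₁`. -/
def Fam1 (R B : Set Pt) : Set (Set Pt) := Fam1Blue R B ∪ Fam1Red R B

/-- The family `𝓡₂`: blue rectangles with a point of `S` at the bottom-right corner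
together with red rectangles with a point of `S` at the bottom-left corner. -/
def Fam2 (R B : Set Pt) : Set (Set Pt) :=
  {A | ∃ p q, p ∈ B ∧ q ∈ B ∧ p ≠ q ∧ A = D p q ∧ A ∩ (R ∪ B) = {p, q} ∧
    (max p.1 q.1, min p.2 q.2) ∈ R ∪ B} ∪
  {A | ∃ p q, p ∈ R ∧ q ∈ R ∧ p ≠ q ∧ A = D p q ∧ A ∩ (R ∪ B) = {p, q} ∧
    (min p.1 q.1, min p.2 q.2) ∈ R ∪ B}

/-- The maximum size of a subfamily of `H` consisting of pairwise-disjoint rectangles. -/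
noncomputable def maxDisjoint (H : Set (Set Pt)) : ℕ :=
  sSup {n | ∃ I ⊆ H, I.Pairwise (fun A B => A ∩ B = ∅) ∧ I.ncard = n}


lemma mem_D_iff {z p q : Pt} : z ∈ D p q ↔
    (min p.1 q.1 ≤ z.1 ∧ z.1 ≤ max p.1 q.1) ∧ (min p.2 q.2 ≤ z.2 ∧ z.2 ≤ max p.2 q.2) := by
  rw [D, Set.mem_prod, Set.mem_Icc, Set.mem_Icc]

lemma core_stmt4 (a₁ a₂ a₃ a₄ b₁ b₂ b₃ b₄ : ℝ)
    (o1 : a₁ ≤ b₂) (o2 : b₁ ≤ a₂) (o3 : a₃ ≤ b₄) (o4 : b₃ ≤ a₄)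
    (np : ¬((b₁ ≤ a₁ ∧ a₁ ≤ b₂) ∧ (b₃ ≤ a₃ ∧ a₃ ≤ b₄)))
    (nq : ¬((b₁ ≤ a₂ ∧ a₂ ≤ b₂) ∧ (b₃ ≤ a₄ ∧ a₄ ≤ b₄)))
    (nq' : ¬((a₁ ≤ b₁ ∧ b₁ ≤ a₂) ∧ (a₃ ≤ b₄ ∧ b₄ ≤ a₄)))
    (np' : ¬((a₁ ≤ b₂ ∧ b₂ ≤ a₂) ∧ (a₃ ≤ b₃ ∧ b₃ ≤ a₄))) :
    (a₁ ≤ b₁ ∧ b₂ ≤ a₂ ∧ b₃ ≤ a₃ ∧ a₄ ≤ b₄) ∨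
    (b₁ ≤ a₁ ∧ a₂ ≤ b₂ ∧ a₃ ≤ b₃ ∧ b₄ ≤ a₄) := by
  rcases le_or_gt a₁ b₁ with h | h
  · left
    have h4 : a₄ < b₄ := by
      by_contra hc; push_neg at hc; exact nq' ⟨⟨h, o2⟩, ⟨o3, hc⟩⟩
    have h2 : b₂ < a₂ := by
      by_contra hc; push_neg at hc; exact nq ⟨⟨o2, hc⟩, ⟨o4, h4.le⟩⟩
    have h3 : b₃ < a₃ := by
      by_contra hc; push_neg at hc; exact np' ⟨⟨o1, h2.le⟩, ⟨hc, o4⟩⟩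
    exact ⟨h, h2.le, h3.le, h4.le⟩
  · right
    have h3 : a₃ < b₃ := by
      by_contra hc; push_neg at hc; exact np ⟨⟨h.le, o1⟩, ⟨hc, o3⟩⟩
    have h2 : a₂ < b₂ := by
      by_contra hc; push_neg at hc; exact np' ⟨⟨o1, hc⟩, ⟨h3.le, o4⟩⟩
    have h4 : b₄ < a₄ := by
      by_contra hc; push_neg at hc; exact nq ⟨⟨o2, h2.le⟩, ⟨o4, hc⟩⟩
    exact ⟨h.le, h2.le, h3.le, h4.le⟩

/-- If the bottom-left corner of `D p q` is `p` or `q`, the top-right corner is too. -/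
lemma tr_mem {p q : Pt} (h : (min p.1 q.1, min p.2 q.2) = p ∨ (min p.1 q.1, min p.2 q.2) = q) :
    (max p.1 q.1, max p.2 q.2) = p ∨ (max p.1 q.1, max p.2 q.2) = q := by
  rcases h with h | h
  · right
    obtain ⟨h1, h2⟩ := Prod.mk.injEq .. ▸ h
    have hx : p.1 ≤ q.1 := by rw [← h1]; exact min_le_right _ _
    have hy : p.2 ≤ q.2 := by rw [← h2]; exact min_le_right _ _
    rw [max_eq_right hx, max_eq_right hy]
  · left
    obtain ⟨h1, h2⟩ := Prod.mk.injEq .. ▸ h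
    have hx : q.1 ≤ p.1 := by rw [← h1]; exact min_le_left _ _
    have hy : q.2 ≤ p.2 := by rw [← h2]; exact min_le_left _ _
    rw [max_eq_left hx, max_eq_left hy]

/-- If the bottom-right corner of `D p q` is `p` or `q`, the top-left corner is too. -/
lemma tl_mem {p q : Pt} (h : (max p.1 q.1, min p.2 q.2) = p ∨ (max p.1 q.1, min p.2 q.2) = q) :
    (min p.1 q.1, max p.2 q.2) = p ∨ (min p.1 q.1, max p.2 q.2) = q := by
  rcases h with h | h
  · right
    obtain ⟨h1, h2⟩ := Prod.mk.injEq .. ▸ h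
    have hx : q.1 ≤ p.1 := by rw [← h1]; exact le_max_right _ _
    have hy : p.2 ≤ q.2 := by rw [← h2]; exact min_le_right _ _
    rw [min_eq_right hx, max_eq_right hy]
  · left
    obtain ⟨h1, h2⟩ := Prod.mk.injEq .. ▸ h
    have hx : p.1 ≤ q.1 := by rw [← h1]; exact le_max_left _ _
    have hy : q.2 ≤ p.2 := by rw [← h2]; exact min_le_left _ _
    rw [min_eq_left hx, max_eq_left hy]

/-- An intersecting blue rectangle and red rectangle of the
family `𝓡₁` always have a piercing intersection. -/
theorem stmt4 (R B : Set Pt) (hfin : (R ∪ B).Finite) (hdisj : R ∩ B = ∅)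
    (A A' : Set Pt) (hA : A ∈ Fam1Blue R B) (hA' : A' ∈ Fam1Red R B)
    (hinter : (A ∩ A').Nonempty) :
    PiercingInter A A' := by
  obtain ⟨p, q, hpB, hqB, hpq, hAeq, hAS, hBLS⟩ := hA
  obtain ⟨p', q', hp'R, hq'R, hpq', hA'eq, hA'S, hBRS⟩ := hA'
  -- notation for the coordinates
  set a₁ := min p.1 q.1 with ha₁
  set a₂ := max p.1 q.1 with ha₂
  set a₃ := min p.2 q.2 with ha₃
  set a₄ := max p.2 q.2 with ha₄
  set b₁ := min p'.1 q'.1 with hb₁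
  set b₂ := max p'.1 q'.1 with hb₂
  set b₃ := min p'.2 q'.2 with hb₃
  set b₄ := max p'.2 q'.2 with hb₄
  have h12 : a₁ ≤ a₂ := min_le_max
  have h34 : a₃ ≤ a₄ := min_le_max
  have h12' : b₁ ≤ b₂ := min_le_max
  have h34' : b₃ ≤ b₄ := min_le_max
  -- the bottom-left corner of A is p or q
  have hBLA : (a₁, a₃) ∈ A := by
    rw [hAeq, mem_D_iff]; exact ⟨⟨le_refl _, h12⟩, ⟨le_refl _, h34⟩⟩
  have hBLpq : (a₁, a₃) = p ∨ (a₁, a₃) = q := by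
    have : (a₁, a₃) ∈ A ∩ (R ∪ B) := ⟨hBLA, hBLS⟩
    rw [hAS] at this; simpa using this
  have hTRpq : (a₂, a₄) = p ∨ (a₂, a₄) = q := tr_mem hBLpq
  -- the bottom-right corner of A' is p' or q'
  have hBRA' : (b₂, b₃) ∈ A' := by
    rw [hA'eq, mem_D_iff]; exact ⟨⟨h12', le_refl _⟩, ⟨le_refl _, h34'⟩⟩
  have hBRpq : (b₂, b₃) = p' ∨ (b₂, b₃) = q' := by
    have : (b₂, b₃) ∈ A' ∩ (R ∪ B) := ⟨hBRA', hBRS⟩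
    rw [hA'S] at this; simpa using this
  have hTLpq : (b₁, b₄) = p' ∨ (b₁, b₄) = q' := tl_mem hBRpq
  -- blue points are not in A', red points are not in A
  have hblue : ∀ c : Pt, c = p ∨ c = q → c ∉ A' := by
    intro c hc hcA'
    have hcB : c ∈ B := by rcases hc with rfl | rfl <;> assumption
    have : c ∈ A' ∩ (R ∪ B) := ⟨hcA', Or.inr hcB⟩
    rw [hA'S] at this
    have hcR : c ∈ R := by rcases this with rfl | h; · exact hp'R
                           · simp at h; exact h ▸ hq'R
    have : c ∈ R ∩ B := ⟨hcR, hcB⟩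
    rw [hdisj] at this; exact this
  have hred : ∀ c : Pt, c = p' ∨ c = q' → c ∉ A := by
    intro c hc hcA
    have hcR : c ∈ R := by rcases hc with rfl | rfl <;> assumption
    have : c ∈ A ∩ (R ∪ B) := ⟨hcA, Or.inl hcR⟩
    rw [hAS] at this
    have hcB : c ∈ B := by rcases this with rfl | h; · exact hpB
                           · simp at h; exact h ▸ hqB
    have : c ∈ R ∩ B := ⟨hcR, hcB⟩
    rw [hdisj] at this; exact this
  -- overlap inequalities
  obtain ⟨z, hzA, hzA'⟩ := hinter
  rw [hAeq, mem_D_iff] at hzA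
  rw [hA'eq, mem_D_iff] at hzA'
  obtain ⟨⟨z1, z2⟩, ⟨z3, z4⟩⟩ := hzA
  obtain ⟨⟨w1, w2⟩, ⟨w3, w4⟩⟩ := hzA'
  have o1 : a₁ ≤ b₂ := z1.trans w2
  have o2 : b₁ ≤ a₂ := w1.trans z2
  have o3 : a₃ ≤ b₄ := z3.trans w4
  have o4 : b₃ ≤ a₄ := w3.trans z4
  -- non-membership inequalities
  have np : ¬((b₁ ≤ a₁ ∧ a₁ ≤ b₂) ∧ (b₃ ≤ a₃ ∧ a₃ ≤ b₄)) := by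
    intro h; exact hblue (a₁, a₃) hBLpq (by rw [hA'eq, mem_D_iff]; exact h)
  have nq : ¬((b₁ ≤ a₂ ∧ a₂ ≤ b₂) ∧ (b₃ ≤ a₄ ∧ a₄ ≤ b₄)) := by
    intro h; exact hblue (a₂, a₄) hTRpq (by rw [hA'eq, mem_D_iff]; exact h)
  have nq' : ¬((a₁ ≤ b₁ ∧ b₁ ≤ a₂) ∧ (a₃ ≤ b₄ ∧ b₄ ≤ a₄)) := by
    intro h; exact hred (b₁, b₄) hTLpq (by rw [hAeq, mem_D_iff]; exact h)
  have np' : ¬((a₁ ≤ b₂ ∧ b₂ ≤ a₂) ∧ (a₃ ≤ b₃ ∧ b₃ ≤ a₄)) := by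
    intro h; exact hred (b₂, b₃) hBRpq (by rw [hAeq, mem_D_iff]; exact h)
  -- image computations
  have hfstA : Prod.fst '' A = Set.Icc a₁ a₂ := by
    rw [hAeq, D, Set.fst_image_prod _ (Set.nonempty_Icc.mpr h34)]
  have hsndA : Prod.snd '' A = Set.Icc a₃ a₄ := by
    rw [hAeq, D, Set.snd_image_prod (Set.nonempty_Icc.mpr h12)]
  have hfstA' : Prod.fst '' A' = Set.Icc b₁ b₂ := by
    rw [hA'eq, D, Set.fst_image_prod _ (Set.nonempty_Icc.mpr h34')]
  have hsndA' : Prod.snd '' A' = Set.Icc b₃ b₄ := by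
    rw [hA'eq, D, Set.snd_image_prod (Set.nonempty_Icc.mpr h12')]
  rcases core_stmt4 a₁ a₂ a₃ a₄ b₁ b₂ b₃ b₄ o1 o2 o3 o4 np nq nq' np' with
    ⟨c1, c2, c3, c4⟩ | ⟨c1, c2, c3, c4⟩
  · right
    constructor
    · rw [hfstA, hfstA']; exact Set.Icc_subset_Icc c1 c2
    · rw [hsndA, hsndA']; exact Set.Icc_subset_Icc c3 c4
  · left
    constructor
    · rw [hfstA, hfstA']; exact Set.Icc_subset_Icc c1 c2
    · rw [hsndA, hsndA']; exact Set.Icc_subset_Icc c3 c4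
end

section
/- Let S = R ∪ B be a two-colored finite point set in ℝ². If D and D' are two distinct rectangles of the family R₁ of the same color and D ∩ D' ≠ ∅, then D and D' have a piercing intersection, a corner intersection, or a point intersection (in particular, they never have a side intersection). -/
open Set

lemma mem_rect {a1 a2 b1 b2 : ℝ} {z : Pt} :
    z ∈ (Icc a1 a2 ×ˢ Icc b1 b2 : Set Pt) ↔ (a1 ≤ z.1 ∧ z.1 ≤ a2) ∧ (b1 ≤ z.2 ∧ z.2 ≤ b2) := by
  rw [Set.mem_prod, Set.mem_Icc, Set.mem_Icc]

lemma rect_inter {a1 a2 b1 b2 c1 c2 d1 d2 : ℝ} :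
    (Icc a1 a2 ×ˢ Icc b1 b2 : Set Pt) ∩ (Icc c1 c2 ×ˢ Icc d1 d2)
      = Icc (max a1 c1) (min a2 c2) ×ˢ Icc (max b1 d1) (min b2 d2) := by
  rw [Set.prod_inter_prod, Set.Icc_inter_Icc, Set.Icc_inter_Icc]

lemma rect_inter_singleton {a1 a2 b1 b2 c1 c2 d1 d2 x y : ℝ}
    (h1 : max a1 c1 = x) (h2 : min a2 c2 = x) (h3 : max b1 d1 = y) (h4 : min b2 d2 = y) :
    (Icc a1 a2 ×ˢ Icc b1 b2 : Set Pt) ∩ (Icc c1 c2 ×ˢ Icc d1 d2) = {(x, y)} := by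
  rw [rect_inter, h1, h2, h3, h4, Set.Icc_self, Set.Icc_self, Set.singleton_prod_singleton]

lemma fst_image_rect {a1 a2 b1 b2 : ℝ} (hb : b1 ≤ b2) :
    Prod.fst '' (Icc a1 a2 ×ˢ Icc b1 b2 : Set Pt) = Icc a1 a2 :=
  Set.fst_image_prod _ (Set.nonempty_Icc.mpr hb)

lemma snd_image_rect {a1 a2 b1 b2 : ℝ} (ha : a1 ≤ a2) :
    Prod.snd '' (Icc a1 a2 ×ˢ Icc b1 b2 : Set Pt) = Icc b1 b2 :=
  Set.snd_image_prod (Set.nonempty_Icc.mpr ha) _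

lemma corners_rect {a1 a2 b1 b2 : ℝ} (ha : a1 ≤ a2) (hb : b1 ≤ b2) :
    corners (Icc a1 a2 ×ˢ Icc b1 b2 : Set Pt)
      = {m : Pt | (m.1 = a1 ∨ m.1 = a2) ∧ (m.2 = b1 ∨ m.2 = b2)} := by
  unfold corners
  rw [fst_image_rect hb, snd_image_rect ha, csInf_Icc ha, csSup_Icc ha, csInf_Icc hb, csSup_Icc hb]

lemma pierces_rect {a1 a2 b1 b2 c1 c2 d1 d2 : ℝ} (ha : a1 ≤ a2) (hc : c1 ≤ c2)
    (hb : b1 ≤ b2) (hd : d1 ≤ d2)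
    (h1 : a1 ≤ c1) (h2 : c2 ≤ a2) (h3 : d1 ≤ b1) (h4 : b2 ≤ d2) :
    Pierces (Icc c1 c2 ×ˢ Icc d1 d2 : Set Pt) (Icc a1 a2 ×ˢ Icc b1 b2) := by
  constructor
  · rw [fst_image_rect hd, fst_image_rect hb]; exact Set.Icc_subset_Icc h1 h2
  · rw [snd_image_rect ha, snd_image_rect hc]; exact Set.Icc_subset_Icc h3 h4

lemma cornerInter_comm {P A B : Set Pt} (h : CornerInter P A B) : CornerInter P B A :=
  ⟨h.2.1, h.1, fun c hc => h.2.2 c hc.symm⟩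

/-- Corner-intersection builder, version 1: the corner `(c1,d2)` (top-left of `A'`)
lies in `A` and the corner `(a2,b1)` (bottom-right of `A`) lies in `A'`. -/
lemma cornerInter_rect1 (S : Set Pt) {a1 a2 b1 b2 c1 c2 d1 d2 : ℝ}
    (ha : a1 ≤ a2) (hb : b1 ≤ b2) (hc : c1 ≤ c2) (hd : d1 ≤ d2)
    (h1 : a1 < c1) (h2 : a2 < c2) (h3 : d1 < b1) (h4 : d2 < b2)
    (h5 : c1 ≤ a2) (h6 : b1 ≤ d2)
    (hS1 : ((c1, d2) : Pt) ∉ S) (hS2 : ((a2, b1) : Pt) ∉ S) :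
    CornerInter S (Icc a1 a2 ×ˢ Icc b1 b2) (Icc c1 c2 ×ˢ Icc d1 d2) := by
  have u1 : ∀ m : Pt, (m ∈ corners (Icc c1 c2 ×ˢ Icc d1 d2 : Set Pt)
      ∧ m ∈ (Icc a1 a2 ×ˢ Icc b1 b2 : Set Pt)) → m = (c1, d2) := by
    rintro ⟨m1, m2⟩ ⟨hm, hmA⟩
    rw [corners_rect hc hd] at hm
    rw [mem_rect] at hmA
    simp only [Set.mem_setOf_eq] at hm
    dsimp only at hm hmA
    obtain ⟨⟨hx1, hx2⟩, hy1, hy2⟩ := hmA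
    obtain ⟨hx | hx, hy | hy⟩ := hm
    · exfalso; linarith
    · subst hx; subst hy; rfl
    · exfalso; linarith
    · exfalso; linarith
  have u2 : ∀ m : Pt, (m ∈ corners (Icc a1 a2 ×ˢ Icc b1 b2 : Set Pt)
      ∧ m ∈ (Icc c1 c2 ×ˢ Icc d1 d2 : Set Pt)) → m = (a2, b1) := by
    rintro ⟨m1, m2⟩ ⟨hm, hmA⟩
    rw [corners_rect ha hb] at hm
    rw [mem_rect] at hmA
    simp only [Set.mem_setOf_eq] at hm
    dsimp only at hm hmA
    obtain ⟨⟨hx1, hx2⟩, hy1, hy2⟩ := hmA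
    obtain ⟨hx | hx, hy | hy⟩ := hm
    · exfalso; subst hx; linarith
    · exfalso; subst hx; linarith
    · subst hx; subst hy; rfl
    · exfalso; subst hy; linarith
  have e1 : ((c1, d2) : Pt) ∈ corners (Icc c1 c2 ×ˢ Icc d1 d2 : Set Pt)
      ∧ ((c1, d2) : Pt) ∈ (Icc a1 a2 ×ˢ Icc b1 b2 : Set Pt) := by
    constructor
    · rw [corners_rect hc hd]; exact ⟨Or.inl rfl, Or.inr rfl⟩
    · rw [mem_rect]; exact ⟨⟨h1.le, h5⟩, h6, h4.le⟩
  have e2 : ((a2, b1) : Pt) ∈ corners (Icc a1 a2 ×ˢ Icc b1 b2 : Set Pt)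
      ∧ ((a2, b1) : Pt) ∈ (Icc c1 c2 ×ˢ Icc d1 d2 : Set Pt) := by
    constructor
    · rw [corners_rect ha hb]; exact ⟨Or.inr rfl, Or.inl rfl⟩
    · rw [mem_rect]; exact ⟨⟨h5, h2.le⟩, h3.le, h6⟩
  refine ⟨⟨(c1, d2), e1, u1⟩, ⟨(a2, b1), e2, u2⟩, ?_⟩
  rintro c (hc' | hc')
  · rw [u1 c hc']; exact hS1
  · rw [u2 c hc']; exact hS2

/-- Corner-intersection builder, version 2: the corner `(c1,d1)` (bottom-left of `A'`)
lies in `A` and the corner `(a2,b2)` (top-right of `A`) lies in `A'`. -/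
lemma cornerInter_rect2 (S : Set Pt) {a1 a2 b1 b2 c1 c2 d1 d2 : ℝ}
    (ha : a1 ≤ a2) (hb : b1 ≤ b2) (hc : c1 ≤ c2) (hd : d1 ≤ d2)
    (h1 : a1 < c1) (h2 : a2 < c2) (h3 : b1 < d1) (h4 : b2 < d2)
    (h5 : c1 ≤ a2) (h6 : d1 ≤ b2)
    (hS1 : ((c1, d1) : Pt) ∉ S) (hS2 : ((a2, b2) : Pt) ∉ S) :
    CornerInter S (Icc a1 a2 ×ˢ Icc b1 b2) (Icc c1 c2 ×ˢ Icc d1 d2) := by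
  have u1 : ∀ m : Pt, (m ∈ corners (Icc c1 c2 ×ˢ Icc d1 d2 : Set Pt)
      ∧ m ∈ (Icc a1 a2 ×ˢ Icc b1 b2 : Set Pt)) → m = (c1, d1) := by
    rintro ⟨m1, m2⟩ ⟨hm, hmA⟩
    rw [corners_rect hc hd] at hm
    rw [mem_rect] at hmA
    simp only [Set.mem_setOf_eq] at hm
    dsimp only at hm hmA
    obtain ⟨⟨hx1, hx2⟩, hy1, hy2⟩ := hmA
    obtain ⟨hx | hx, hy | hy⟩ := hm
    · subst hx; subst hy; rfl
    · exfalso; linarith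
    · exfalso; linarith
    · exfalso; linarith
  have u2 : ∀ m : Pt, (m ∈ corners (Icc a1 a2 ×ˢ Icc b1 b2 : Set Pt)
      ∧ m ∈ (Icc c1 c2 ×ˢ Icc d1 d2 : Set Pt)) → m = (a2, b2) := by
    rintro ⟨m1, m2⟩ ⟨hm, hmA⟩
    rw [corners_rect ha hb] at hm
    rw [mem_rect] at hmA
    simp only [Set.mem_setOf_eq] at hm
    dsimp only at hm hmA
    obtain ⟨⟨hx1, hx2⟩, hy1, hy2⟩ := hmA
    obtain ⟨hx | hx, hy | hy⟩ := hm
    · exfalso; linarith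
    · exfalso; linarith
    · exfalso; linarith
    · subst hx; subst hy; rfl
  have e1 : ((c1, d1) : Pt) ∈ corners (Icc c1 c2 ×ˢ Icc d1 d2 : Set Pt)
      ∧ ((c1, d1) : Pt) ∈ (Icc a1 a2 ×ˢ Icc b1 b2 : Set Pt) := by
    constructor
    · rw [corners_rect hc hd]; exact ⟨Or.inl rfl, Or.inl rfl⟩
    · rw [mem_rect]; exact ⟨⟨h1.le, h5⟩, h3.le, h6⟩
  have e2 : ((a2, b2) : Pt) ∈ corners (Icc a1 a2 ×ˢ Icc b1 b2 : Set Pt)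
      ∧ ((a2, b2) : Pt) ∈ (Icc c1 c2 ×ˢ Icc d1 d2 : Set Pt) := by
    constructor
    · rw [corners_rect ha hb]; exact ⟨Or.inr rfl, Or.inr rfl⟩
    · rw [mem_rect]; exact ⟨⟨h5, h2.le⟩, h6, h4.le⟩
  refine ⟨⟨(c1, d1), e1, u1⟩, ⟨(a2, b2), e2, u2⟩, ?_⟩
  rintro c (hc' | hc')
  · rw [u1 c hc']; exact hS1
  · rw [u2 c hc']; exact hS2

/-- If the bottom-left `S`-corner `(c1,d1)` of `A'` lies in `A`, it coincides with a
defining point of `A`: either the bottom-left one, or the top-right one, in which case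
the intersection degenerates to that single point. -/
lemma blue_BL (S : Set Pt) {a1 a2 b1 b2 c1 c2 d1 d2 : ℝ}
    (ha : a1 ≤ a2) (hb : b1 ≤ b2) (hc : c1 ≤ c2) (hd : d1 ≤ d2)
    (hA : (Icc a1 a2 ×ˢ Icc b1 b2 : Set Pt) ∩ S = {(a1, b1), (a2, b2)})
    (h : ((c1, d1) : Pt) ∈ (Icc a1 a2 ×ˢ Icc b1 b2 : Set Pt)) (hS : ((c1, d1) : Pt) ∈ S) :
    (c1 = a1 ∧ d1 = b1) ∨
      (Icc a1 a2 ×ˢ Icc b1 b2 : Set Pt) ∩ (Icc c1 c2 ×ˢ Icc d1 d2) = {((a2, b2) : Pt)} := by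
  have hmem : ((c1, d1) : Pt) ∈ ({(a1, b1), (a2, b2)} : Set Pt) := hA ▸ ⟨h, hS⟩
  rcases hmem with h' | h'
  · rw [Prod.mk.injEq] at h'; exact Or.inl h'
  · rw [Set.mem_singleton_iff, Prod.mk.injEq] at h'
    obtain ⟨e1, e2⟩ := h'
    refine Or.inr (rect_inter_singleton ?_ ?_ ?_ ?_)
    · rw [e1]; exact max_eq_right ha
    · exact min_eq_left (e1 ▸ hc)
    · rw [e2]; exact max_eq_right hb
    · exact min_eq_left (e2 ▸ hd)

/-- If the top-right `S`-corner `(c2,d2)` of `A'` lies in `A`, it coincides with a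
defining point of `A`. -/
lemma blue_TR (S : Set Pt) {a1 a2 b1 b2 c1 c2 d1 d2 : ℝ}
    (ha : a1 ≤ a2) (hb : b1 ≤ b2) (hc : c1 ≤ c2) (hd : d1 ≤ d2)
    (hA : (Icc a1 a2 ×ˢ Icc b1 b2 : Set Pt) ∩ S = {(a1, b1), (a2, b2)})
    (h : ((c2, d2) : Pt) ∈ (Icc a1 a2 ×ˢ Icc b1 b2 : Set Pt)) (hS : ((c2, d2) : Pt) ∈ S) :
    (c2 = a2 ∧ d2 = b2) ∨
      (Icc a1 a2 ×ˢ Icc b1 b2 : Set Pt) ∩ (Icc c1 c2 ×ˢ Icc d1 d2) = {((a1, b1) : Pt)} := by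
  have hmem : ((c2, d2) : Pt) ∈ ({(a1, b1), (a2, b2)} : Set Pt) := hA ▸ ⟨h, hS⟩
  rcases hmem with h' | h'
  · rw [Prod.mk.injEq] at h'
    obtain ⟨e1, e2⟩ := h'
    refine Or.inr (rect_inter_singleton ?_ ?_ ?_ ?_)
    · exact max_eq_left (e1 ▸ hc)
    · rw [e1]; exact min_eq_right ha
    · exact max_eq_left (e2 ▸ hd)
    · rw [e2]; exact min_eq_right hb
  · rw [Set.mem_singleton_iff, Prod.mk.injEq] at h'; exact Or.inl h'

/-- Red analogue of `blue_BL`: the bottom-right `S`-corner `(c2,d1)` of `A'` in `A`. -/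
lemma red_BR (S : Set Pt) {a1 a2 b1 b2 c1 c2 d1 d2 : ℝ}
    (ha : a1 ≤ a2) (hb : b1 ≤ b2) (hc : c1 ≤ c2) (hd : d1 ≤ d2)
    (hA : (Icc a1 a2 ×ˢ Icc b1 b2 : Set Pt) ∩ S = {(a2, b1), (a1, b2)})
    (h : ((c2, d1) : Pt) ∈ (Icc a1 a2 ×ˢ Icc b1 b2 : Set Pt)) (hS : ((c2, d1) : Pt) ∈ S) :
    (c2 = a2 ∧ d1 = b1) ∨
      (Icc a1 a2 ×ˢ Icc b1 b2 : Set Pt) ∩ (Icc c1 c2 ×ˢ Icc d1 d2) = {((a1, b2) : Pt)} := by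
  have hmem : ((c2, d1) : Pt) ∈ ({(a2, b1), (a1, b2)} : Set Pt) := hA ▸ ⟨h, hS⟩
  rcases hmem with h' | h'
  · rw [Prod.mk.injEq] at h'; exact Or.inl h'
  · rw [Set.mem_singleton_iff, Prod.mk.injEq] at h'
    obtain ⟨e1, e2⟩ := h'
    refine Or.inr (rect_inter_singleton ?_ ?_ ?_ ?_)
    · exact max_eq_left (e1 ▸ hc)
    · rw [e1]; exact min_eq_right ha
    · rw [e2]; exact max_eq_right hb
    · exact min_eq_left (e2 ▸ hd)

/-- Red analogue of `blue_TR`: the top-left `S`-corner `(c1,d2)` of `A'` in `A`. -/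
lemma red_TL (S : Set Pt) {a1 a2 b1 b2 c1 c2 d1 d2 : ℝ}
    (ha : a1 ≤ a2) (hb : b1 ≤ b2) (hc : c1 ≤ c2) (hd : d1 ≤ d2)
    (hA : (Icc a1 a2 ×ˢ Icc b1 b2 : Set Pt) ∩ S = {(a2, b1), (a1, b2)})
    (h : ((c1, d2) : Pt) ∈ (Icc a1 a2 ×ˢ Icc b1 b2 : Set Pt)) (hS : ((c1, d2) : Pt) ∈ S) :
    (c1 = a1 ∧ d2 = b2) ∨
      (Icc a1 a2 ×ˢ Icc b1 b2 : Set Pt) ∩ (Icc c1 c2 ×ˢ Icc d1 d2) = {((a2, b1) : Pt)} := by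
  have hmem : ((c1, d2) : Pt) ∈ ({(a2, b1), (a1, b2)} : Set Pt) := hA ▸ ⟨h, hS⟩
  rcases hmem with h' | h'
  · rw [Prod.mk.injEq] at h'
    obtain ⟨e1, e2⟩ := h'
    refine Or.inr (rect_inter_singleton ?_ ?_ ?_ ?_)
    · rw [e1]; exact max_eq_right ha
    · exact min_eq_left (e1 ▸ hc)
    · exact max_eq_left (e2 ▸ hd)
    · rw [e2]; exact min_eq_right hb
  · rw [Set.mem_singleton_iff, Prod.mk.injEq] at h'; exact Or.inl h'

lemma core_blue (S : Set Pt) (a1 a2 b1 b2 c1 c2 d1 d2 : ℝ)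
    (ha : a1 ≤ a2) (hb : b1 ≤ b2) (hc : c1 ≤ c2) (hd : d1 ≤ d2)
    (hA : (Icc a1 a2 ×ˢ Icc b1 b2 : Set Pt) ∩ S = {(a1, b1), (a2, b2)})
    (hA' : (Icc c1 c2 ×ˢ Icc d1 d2 : Set Pt) ∩ S = {(c1, d1), (c2, d2)})
    (hne : (Icc a1 a2 ×ˢ Icc b1 b2 : Set Pt) ≠ Icc c1 c2 ×ˢ Icc d1 d2)
    (hx1 : c1 ≤ a2) (hx2 : a1 ≤ c2) (hy1 : d1 ≤ b2) (hy2 : b1 ≤ d2) :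
    PiercingInter (Icc a1 a2 ×ˢ Icc b1 b2) (Icc c1 c2 ×ˢ Icc d1 d2) ∨
    CornerInter S (Icc a1 a2 ×ˢ Icc b1 b2) (Icc c1 c2 ×ˢ Icc d1 d2) ∨
    PointInter S (Icc a1 a2 ×ˢ Icc b1 b2) (Icc c1 c2 ×ˢ Icc d1 d2) := by
  have hPS : ((a1, b1) : Pt) ∈ S := by
    have : ((a1, b1) : Pt) ∈ (Icc a1 a2 ×ˢ Icc b1 b2 : Set Pt) ∩ S := by
      rw [hA]; exact Set.mem_insert _ _
    exact this.2
  have hQS : ((a2, b2) : Pt) ∈ S := by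
    have : ((a2, b2) : Pt) ∈ (Icc a1 a2 ×ˢ Icc b1 b2 : Set Pt) ∩ S := by
      rw [hA]; exact Set.mem_insert_of_mem _ rfl
    exact this.2
  have hP'S : ((c1, d1) : Pt) ∈ S := by
    have : ((c1, d1) : Pt) ∈ (Icc c1 c2 ×ˢ Icc d1 d2 : Set Pt) ∩ S := by
      rw [hA']; exact Set.mem_insert _ _
    exact this.2
  have hQ'S : ((c2, d2) : Pt) ∈ S := by
    have : ((c2, d2) : Pt) ∈ (Icc c1 c2 ×ˢ Icc d1 d2 : Set Pt) ∩ S := by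
      rw [hA']; exact Set.mem_insert_of_mem _ rfl
    exact this.2
  -- helper applications, used below via `rcases`
  rcases le_or_gt a1 c1 with hxa | hxa
  · rcases le_or_gt c2 a2 with hxb | hxb
    · -- x : N' (a1 ≤ c1, c2 ≤ a2)
      rcases le_or_gt b1 d1 with hya | hya
      · rcases le_or_gt d2 b2 with hyb | hyb
        · -- (N', N')
          have hm1 : ((c1, d1) : Pt) ∈ (Icc a1 a2 ×ˢ Icc b1 b2 : Set Pt) := by
            rw [mem_rect]; refine ⟨⟨?_, ?_⟩, ?_, ?_⟩ <;> linarith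
          rcases blue_BL S ha hb hc hd hA hm1 hP'S with ⟨e1, e2⟩ | hsing
          · have hm2 : ((c2, d2) : Pt) ∈ (Icc a1 a2 ×ˢ Icc b1 b2 : Set Pt) := by
              rw [mem_rect]; refine ⟨⟨?_, ?_⟩, ?_, ?_⟩ <;> linarith
            rcases blue_TR S ha hb hc hd hA hm2 hQ'S with ⟨f1, f2⟩ | hsing2
            · exact absurd (by subst e1; subst e2; subst f1; subst f2; rfl) hne
            · exact Or.inr (Or.inr ⟨(a1, b1), hPS, hsing2⟩)
          · exact Or.inr (Or.inr ⟨(a2, b2), hQS, hsing⟩)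
        · -- (N', y : b1 ≤ d1, b2 < d2) : p' = (c1,d1) ∈ A
          have hm : ((c1, d1) : Pt) ∈ (Icc a1 a2 ×ˢ Icc b1 b2 : Set Pt) := by
            rw [mem_rect]; refine ⟨⟨?_, ?_⟩, ?_, ?_⟩ <;> linarith
          rcases blue_BL S ha hb hc hd hA hm hP'S with ⟨e1, e2⟩ | hsing
          · exact Or.inl (Or.inr (pierces_rect ha hc hb hd hxa hxb e2.le hyb.le))
          · exact Or.inr (Or.inr ⟨(a2, b2), hQS, hsing⟩)
      · rcases le_or_gt d2 b2 with hyb | hyb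
        · -- (N', "d1 < b1, d2 ≤ b2") : could be y-N or y-L; split on b2 ≤ d2?
          -- here d1 < b1 and d2 ≤ b2 : y is L if d2 < b2, else if d2 = b2 treat via q'.
          -- q' = (c2,d2) ∈ A works whenever b1 ≤ d2 (hy2) and d2 ≤ b2 (hyb):
          have hm : ((c2, d2) : Pt) ∈ (Icc a1 a2 ×ˢ Icc b1 b2 : Set Pt) := by
            rw [mem_rect]; refine ⟨⟨?_, ?_⟩, ?_, ?_⟩ <;> linarith
          rcases blue_TR S ha hb hc hd hA hm hQ'S with ⟨f1, f2⟩ | hsing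
          · -- c2 = a2, d2 = b2 : then p' = (c1,d1) ∈ A as well? d1 < b1, so p' ∉ A.
            -- use p = (a1,b1) ∈ A' : c1 ≤ a1 ? unknown. Instead use y-N case:
            -- d1 < b1 and b2 = d2 means y-N (d1 ≤ b1, b2 ≤ d2). x: a1 ≤ c1, c2 ≤ a2, c2 = a2.
            -- q = (a2,b2) ∈ A' : c1 ≤ a2 (hx1), a2 ≤ c2 (f1 ▸ le_rfl), d1 ≤ b2, b2 ≤ d2.
            have hm2 : ((a2, b2) : Pt) ∈ (Icc c1 c2 ×ˢ Icc d1 d2 : Set Pt) := by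
              rw [mem_rect]; refine ⟨⟨?_, ?_⟩, ?_, ?_⟩ <;> linarith
            rcases blue_TR S hc hd ha hb hA' hm2 hQS with ⟨g1, g2⟩ | hsing2
            · -- a2 = c2, b2 = d2 : now p' ∈ A? still no. use p ∈ A'? c1 ≤ a1 unknown.
              -- x: a1 ≤ c1 ∧ c2 ≤ a2 ∧ a2 = c2; y: d1 < b1, b2 = d2.
              -- piercing: A' pierced? x-proj A' ⊆ x-proj A (a1 ≤ c1, c2 ≤ a2),
              -- y-proj A ⊆ y-proj A' (d1 ≤ b1, b2 ≤ d2). Pierces A' A.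
              exact Or.inl (Or.inr (pierces_rect ha hc hb hd hxa hxb hya.le (le_of_eq g2)))
            · exact Or.inr (Or.inr ⟨(c1, d1), hP'S, by rw [Set.inter_comm]; exact hsing2⟩)
          · exact Or.inr (Or.inr ⟨(a1, b1), hPS, hsing⟩)
        · -- (N', y-?) d1 < b1, b2 < d2 : y is N (d1 ≤ b1, b2 ≤ d2) : Pierces A' A
          exact Or.inl (Or.inr (pierces_rect ha hc hb hd hxa hxb hya.le hyb.le))
    · -- a1 ≤ c1, a2 < c2
      rcases eq_or_lt_of_le hxa with hxe | hxa'
      · -- x : N (c1 = a1, a2 < c2)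
        rcases le_or_gt b1 d1 with hya | hya
        · rcases le_or_gt d2 b2 with hyb | hyb
          · -- (N, N') : Pierces A A'
            exact Or.inl (Or.inl (pierces_rect hc ha hd hb (le_of_eq hxe.symm) hxb.le hya hyb))
          · -- (N, R) : q = (a2,b2) ∈ A'
            have hm : ((a2, b2) : Pt) ∈ (Icc c1 c2 ×ˢ Icc d1 d2 : Set Pt) := by
              rw [mem_rect]; refine ⟨⟨?_, ?_⟩, ?_, ?_⟩ <;> linarith
            rcases blue_TR S hc hd ha hb hA' hm hQS with ⟨g1, g2⟩ | hsing
            · exact absurd g2 (by intro h; linarith)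
            · exact Or.inr (Or.inr ⟨(c1, d1), hP'S, by rw [Set.inter_comm]; exact hsing⟩)
        · -- (N, y with d1 < b1) : p = (a1,b1) ∈ A'
          have hm : ((a1, b1) : Pt) ∈ (Icc c1 c2 ×ˢ Icc d1 d2 : Set Pt) := by
            rw [mem_rect]; refine ⟨⟨?_, ?_⟩, ?_, ?_⟩ <;> linarith
          rcases blue_BL S hc hd ha hb hA' hm hPS with ⟨g1, g2⟩ | hsing
          · exact absurd g2 (by intro h; linarith)
          · exact Or.inr (Or.inr ⟨(c2, d2), hQ'S, by rw [Set.inter_comm]; exact hsing⟩)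
      · -- x : R (a1 < c1, a2 < c2)
        rcases le_or_gt b1 d1 with hya | hya
        · -- b1 ≤ d1 : p' = (c1,d1) ∈ A (c1 ≤ a2 by hx1, d1 ≤ b2 by hy1)
          have hm : ((c1, d1) : Pt) ∈ (Icc a1 a2 ×ˢ Icc b1 b2 : Set Pt) := by
            rw [mem_rect]; refine ⟨⟨?_, ?_⟩, ?_, ?_⟩ <;> linarith
          rcases blue_BL S ha hb hc hd hA hm hP'S with ⟨e1, e2⟩ | hsing
          · exact absurd e1 (by intro h; linarith)
          · exact Or.inr (Or.inr ⟨(a2, b2), hQS, hsing⟩)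
        · rcases le_or_gt b2 d2 with hyb | hyb
          · -- (R, y with d1 < b1, b2 ≤ d2) : y is N : q = (a2,b2) ∈ A'
            have hm : ((a2, b2) : Pt) ∈ (Icc c1 c2 ×ˢ Icc d1 d2 : Set Pt) := by
              rw [mem_rect]; refine ⟨⟨?_, ?_⟩, ?_, ?_⟩ <;> linarith
            rcases blue_TR S hc hd ha hb hA' hm hQS with ⟨g1, g2⟩ | hsing
            · exact absurd g1 (by intro h; linarith)
            · exact Or.inr (Or.inr ⟨(c1, d1), hP'S, by rw [Set.inter_comm]; exact hsing⟩)
          · -- (R, L) : corner intersection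
            refine Or.inr (Or.inl (cornerInter_rect1 S ha hb hc hd hxa' hxb hya hyb hx1 hy2 ?_ ?_))
            · intro hS'
              have hm : ((c1, d2) : Pt) ∈ (Icc a1 a2 ×ˢ Icc b1 b2 : Set Pt) ∩ S := by
                refine ⟨by rw [mem_rect]; refine ⟨⟨?_, ?_⟩, ?_, ?_⟩ <;> linarith, hS'⟩
              rw [hA] at hm
              rcases hm with h' | h' <;>
                [skip; rw [Set.mem_singleton_iff] at h'] <;>
                rw [Prod.mk.injEq] at h' <;> obtain ⟨e1, e2⟩ := h' <;> linarith
            · intro hS'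
              have hm : ((a2, b1) : Pt) ∈ (Icc c1 c2 ×ˢ Icc d1 d2 : Set Pt) ∩ S := by
                refine ⟨by rw [mem_rect]; refine ⟨⟨?_, ?_⟩, ?_, ?_⟩ <;> linarith, hS'⟩
              rw [hA'] at hm
              rcases hm with h' | h' <;>
                [skip; rw [Set.mem_singleton_iff] at h'] <;>
                rw [Prod.mk.injEq] at h' <;> obtain ⟨e1, e2⟩ := h' <;> linarith
  · -- c1 < a1
    rcases le_or_gt a2 c2 with hxb | hxb
    · -- x : N (c1 < a1, a2 ≤ c2)
      rcases le_or_gt b1 d1 with hya | hya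
      · rcases le_or_gt d2 b2 with hyb | hyb
        · -- (N, N') : Pierces A A'
          exact Or.inl (Or.inl (pierces_rect hc ha hd hb hxa.le hxb hya hyb))
        · -- (N, "b1 ≤ d1, b2 < d2") : q = (a2,b2) ∈ A' (d1 ≤ b2 by hy1)
          have hm : ((a2, b2) : Pt) ∈ (Icc c1 c2 ×ˢ Icc d1 d2 : Set Pt) := by
            rw [mem_rect]; refine ⟨⟨?_, ?_⟩, ?_, ?_⟩ <;> linarith
          rcases blue_TR S hc hd ha hb hA' hm hQS with ⟨g1, g2⟩ | hsing
          · exact absurd g2 (by intro h; linarith)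
          · exact Or.inr (Or.inr ⟨(c1, d1), hP'S, by rw [Set.inter_comm]; exact hsing⟩)
      · -- (N, d1 < b1) : p = (a1,b1) ∈ A' (b1 ≤ d2 by hy2)
        have hm : ((a1, b1) : Pt) ∈ (Icc c1 c2 ×ˢ Icc d1 d2 : Set Pt) := by
          rw [mem_rect]; refine ⟨⟨?_, ?_⟩, ?_, ?_⟩ <;> linarith
        rcases blue_BL S hc hd ha hb hA' hm hPS with ⟨g1, g2⟩ | hsing
        · exact absurd g1 (by intro h; linarith)
        · exact Or.inr (Or.inr ⟨(c2, d2), hQ'S, by rw [Set.inter_comm]; exact hsing⟩)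
    · -- x : L (c1 < a1, c2 < a2)
      rcases le_or_gt d2 b2 with hyb | hyb
      · -- d2 ≤ b2 : q' = (c2,d2) ∈ A (a1 ≤ c2 by hx2, b1 ≤ d2 by hy2)
        have hm : ((c2, d2) : Pt) ∈ (Icc a1 a2 ×ˢ Icc b1 b2 : Set Pt) := by
          rw [mem_rect]; refine ⟨⟨?_, ?_⟩, ?_, ?_⟩ <;> linarith
        rcases blue_TR S ha hb hc hd hA hm hQ'S with ⟨f1, f2⟩ | hsing
        · exact absurd f1 (by intro h; linarith)
        · exact Or.inr (Or.inr ⟨(a1, b1), hPS, hsing⟩)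
      · rcases le_or_gt d1 b1 with hya | hya
        · -- (L, y with d1 ≤ b1, b2 < d2) : p = (a1,b1) ∈ A'
          have hm : ((a1, b1) : Pt) ∈ (Icc c1 c2 ×ˢ Icc d1 d2 : Set Pt) := by
            rw [mem_rect]; refine ⟨⟨?_, ?_⟩, ?_, ?_⟩ <;> linarith
          rcases blue_BL S hc hd ha hb hA' hm hPS with ⟨g1, g2⟩ | hsing
          · exact absurd g1 (by intro h; linarith)
          · exact Or.inr (Or.inr ⟨(c2, d2), hQ'S, by rw [Set.inter_comm]; exact hsing⟩)
        · -- (L, R) : corner intersection, swapped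
          refine Or.inr (Or.inl (cornerInter_comm
            (cornerInter_rect1 S hc hd ha hb hxa hxb hya hyb hx2 hy1 ?_ ?_)))
          · intro hS'
            have hm : ((a1, b2) : Pt) ∈ (Icc c1 c2 ×ˢ Icc d1 d2 : Set Pt) ∩ S := by
              refine ⟨by rw [mem_rect]; refine ⟨⟨?_, ?_⟩, ?_, ?_⟩ <;> linarith, hS'⟩
            rw [hA'] at hm
            rcases hm with h' | h' <;>
              [skip; rw [Set.mem_singleton_iff] at h'] <;>
              rw [Prod.mk.injEq] at h' <;> obtain ⟨e1, e2⟩ := h' <;> linarith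
          · intro hS'
            have hm : ((c2, d1) : Pt) ∈ (Icc a1 a2 ×ˢ Icc b1 b2 : Set Pt) ∩ S := by
              refine ⟨by rw [mem_rect]; refine ⟨⟨?_, ?_⟩, ?_, ?_⟩ <;> linarith, hS'⟩
            rw [hA] at hm
            rcases hm with h' | h' <;>
              [skip; rw [Set.mem_singleton_iff] at h'] <;>
              rw [Prod.mk.injEq] at h' <;> obtain ⟨e1, e2⟩ := h' <;> linarith

lemma core_red (S : Set Pt) (a1 a2 b1 b2 c1 c2 d1 d2 : ℝ)
    (ha : a1 ≤ a2) (hb : b1 ≤ b2) (hc : c1 ≤ c2) (hd : d1 ≤ d2)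
    (hA : (Icc a1 a2 ×ˢ Icc b1 b2 : Set Pt) ∩ S = {(a2, b1), (a1, b2)})
    (hA' : (Icc c1 c2 ×ˢ Icc d1 d2 : Set Pt) ∩ S = {(c2, d1), (c1, d2)})
    (hne : (Icc a1 a2 ×ˢ Icc b1 b2 : Set Pt) ≠ Icc c1 c2 ×ˢ Icc d1 d2)
    (hx1 : c1 ≤ a2) (hx2 : a1 ≤ c2) (hy1 : d1 ≤ b2) (hy2 : b1 ≤ d2) :
    PiercingInter (Icc a1 a2 ×ˢ Icc b1 b2) (Icc c1 c2 ×ˢ Icc d1 d2) ∨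
    CornerInter S (Icc a1 a2 ×ˢ Icc b1 b2) (Icc c1 c2 ×ˢ Icc d1 d2) ∨
    PointInter S (Icc a1 a2 ×ˢ Icc b1 b2) (Icc c1 c2 ×ˢ Icc d1 d2) := by
  have hPS : ((a2, b1) : Pt) ∈ S := by
    have : ((a2, b1) : Pt) ∈ (Icc a1 a2 ×ˢ Icc b1 b2 : Set Pt) ∩ S := by
      rw [hA]; exact Set.mem_insert _ _
    exact this.2
  have hQS : ((a1, b2) : Pt) ∈ S := by
    have : ((a1, b2) : Pt) ∈ (Icc a1 a2 ×ˢ Icc b1 b2 : Set Pt) ∩ S := by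
      rw [hA]; exact Set.mem_insert_of_mem _ rfl
    exact this.2
  have hP'S : ((c2, d1) : Pt) ∈ S := by
    have : ((c2, d1) : Pt) ∈ (Icc c1 c2 ×ˢ Icc d1 d2 : Set Pt) ∩ S := by
      rw [hA']; exact Set.mem_insert _ _
    exact this.2
  have hQ'S : ((c1, d2) : Pt) ∈ S := by
    have : ((c1, d2) : Pt) ∈ (Icc c1 c2 ×ˢ Icc d1 d2 : Set Pt) ∩ S := by
      rw [hA']; exact Set.mem_insert_of_mem _ rfl
    exact this.2
  rcases le_or_gt a1 c1 with hxa | hxa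
  · rcases le_or_gt c2 a2 with hxb | hxb
    · -- x : N' (a1 ≤ c1, c2 ≤ a2)
      rcases le_or_gt b1 d1 with hya | hya
      · rcases le_or_gt d2 b2 with hyb | hyb
        · -- (N', N')
          have hm1 : ((c2, d1) : Pt) ∈ (Icc a1 a2 ×ˢ Icc b1 b2 : Set Pt) := by
            rw [mem_rect]; refine ⟨⟨?_, ?_⟩, ?_, ?_⟩ <;> linarith
          rcases red_BR S ha hb hc hd hA hm1 hP'S with ⟨e1, e2⟩ | hsing
          · have hm2 : ((c1, d2) : Pt) ∈ (Icc a1 a2 ×ˢ Icc b1 b2 : Set Pt) := by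
              rw [mem_rect]; refine ⟨⟨?_, ?_⟩, ?_, ?_⟩ <;> linarith
            rcases red_TL S ha hb hc hd hA hm2 hQ'S with ⟨f1, f2⟩ | hsing2
            · exact absurd (by subst e1; subst e2; subst f1; subst f2; rfl) hne
            · exact Or.inr (Or.inr ⟨(a2, b1), hPS, hsing2⟩)
          · exact Or.inr (Or.inr ⟨(a1, b2), hQS, hsing⟩)
        · -- (N', y : b1 ≤ d1, b2 < d2)
          have hm : ((c2, d1) : Pt) ∈ (Icc a1 a2 ×ˢ Icc b1 b2 : Set Pt) := by
            rw [mem_rect]; refine ⟨⟨?_, ?_⟩, ?_, ?_⟩ <;> linarith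
          rcases red_BR S ha hb hc hd hA hm hP'S with ⟨e1, e2⟩ | hsing
          · exact Or.inl (Or.inr (pierces_rect ha hc hb hd hxa hxb e2.le hyb.le))
          · exact Or.inr (Or.inr ⟨(a1, b2), hQS, hsing⟩)
      · rcases le_or_gt d2 b2 with hyb | hyb
        · -- (N', y : d1 < b1, d2 ≤ b2)
          have hm : ((c1, d2) : Pt) ∈ (Icc a1 a2 ×ˢ Icc b1 b2 : Set Pt) := by
            rw [mem_rect]; refine ⟨⟨?_, ?_⟩, ?_, ?_⟩ <;> linarith
          rcases red_TL S ha hb hc hd hA hm hQ'S with ⟨f1, f2⟩ | hsing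
          · have hm2 : ((a1, b2) : Pt) ∈ (Icc c1 c2 ×ˢ Icc d1 d2 : Set Pt) := by
              rw [mem_rect]; refine ⟨⟨?_, ?_⟩, ?_, ?_⟩ <;> linarith
            rcases red_TL S hc hd ha hb hA' hm2 hQS with ⟨g1, g2⟩ | hsing2
            · exact Or.inl (Or.inr (pierces_rect ha hc hb hd hxa hxb hya.le g2.le))
            · exact Or.inr (Or.inr ⟨(c2, d1), hP'S, by rw [Set.inter_comm]; exact hsing2⟩)
          · exact Or.inr (Or.inr ⟨(a2, b1), hPS, hsing⟩)
        · -- (N', N-y) : Pierces A' A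
          exact Or.inl (Or.inr (pierces_rect ha hc hb hd hxa hxb hya.le hyb.le))
    · -- a1 ≤ c1, a2 < c2
      rcases eq_or_lt_of_le hxa with hxe | hxa'
      · -- x : N (c1 = a1, a2 < c2)
        rcases le_or_gt b1 d1 with hya | hya
        · rcases le_or_gt d2 b2 with hyb | hyb
          · -- (N, N') : Pierces A A'
            exact Or.inl (Or.inl (pierces_rect hc ha hd hb (le_of_eq hxe.symm) hxb.le hya hyb))
          · -- (N, y : b1 ≤ d1, b2 < d2)
            have hm : ((a1, b2) : Pt) ∈ (Icc c1 c2 ×ˢ Icc d1 d2 : Set Pt) := by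
              rw [mem_rect]; refine ⟨⟨?_, ?_⟩, ?_, ?_⟩ <;> linarith
            rcases red_TL S hc hd ha hb hA' hm hQS with ⟨g1, g2⟩ | hsing
            · exact absurd g2 (by intro h; linarith)
            · exact Or.inr (Or.inr ⟨(c2, d1), hP'S, by rw [Set.inter_comm]; exact hsing⟩)
        · -- (N, d1 < b1)
          have hm : ((a2, b1) : Pt) ∈ (Icc c1 c2 ×ˢ Icc d1 d2 : Set Pt) := by
            rw [mem_rect]; refine ⟨⟨?_, ?_⟩, ?_, ?_⟩ <;> linarith
          rcases red_BR S hc hd ha hb hA' hm hPS with ⟨g1, g2⟩ | hsing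
          · exact absurd g2 (by intro h; linarith)
          · exact Or.inr (Or.inr ⟨(c1, d2), hQ'S, by rw [Set.inter_comm]; exact hsing⟩)
      · -- x : R (a1 < c1, a2 < c2)
        rcases le_or_gt d2 b2 with hyb | hyb
        · -- d2 ≤ b2 : TL' = (c1,d2) ∈ A
          have hm : ((c1, d2) : Pt) ∈ (Icc a1 a2 ×ˢ Icc b1 b2 : Set Pt) := by
            rw [mem_rect]; refine ⟨⟨?_, ?_⟩, ?_, ?_⟩ <;> linarith
          rcases red_TL S ha hb hc hd hA hm hQ'S with ⟨f1, f2⟩ | hsing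
          · exact absurd f1 (by intro h; linarith)
          · exact Or.inr (Or.inr ⟨(a2, b1), hPS, hsing⟩)
        · rcases le_or_gt d1 b1 with hya | hya
          · -- (R, y : d1 ≤ b1, b2 < d2) : P = (a2,b1) ∈ A'
            have hm : ((a2, b1) : Pt) ∈ (Icc c1 c2 ×ˢ Icc d1 d2 : Set Pt) := by
              rw [mem_rect]; refine ⟨⟨?_, ?_⟩, ?_, ?_⟩ <;> linarith
            rcases red_BR S hc hd ha hb hA' hm hPS with ⟨g1, g2⟩ | hsing
            · exact absurd g1 (by intro h; linarith)
            · exact Or.inr (Or.inr ⟨(c1, d2), hQ'S, by rw [Set.inter_comm]; exact hsing⟩)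
          · -- (R, R) : corner intersection
            refine Or.inr (Or.inl (cornerInter_rect2 S ha hb hc hd hxa' hxb hya hyb hx1 hy1 ?_ ?_))
            · intro hS'
              have hm : ((c1, d1) : Pt) ∈ (Icc a1 a2 ×ˢ Icc b1 b2 : Set Pt) ∩ S := by
                refine ⟨by rw [mem_rect]; refine ⟨⟨?_, ?_⟩, ?_, ?_⟩ <;> linarith, hS'⟩
              rw [hA] at hm
              rcases hm with h' | h' <;>
                [skip; rw [Set.mem_singleton_iff] at h'] <;>
                rw [Prod.mk.injEq] at h' <;> obtain ⟨e1, e2⟩ := h' <;> linarith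
            · intro hS'
              have hm : ((a2, b2) : Pt) ∈ (Icc c1 c2 ×ˢ Icc d1 d2 : Set Pt) ∩ S := by
                refine ⟨by rw [mem_rect]; refine ⟨⟨?_, ?_⟩, ?_, ?_⟩ <;> linarith, hS'⟩
              rw [hA'] at hm
              rcases hm with h' | h' <;>
                [skip; rw [Set.mem_singleton_iff] at h'] <;>
                rw [Prod.mk.injEq] at h' <;> obtain ⟨e1, e2⟩ := h' <;> linarith
  · -- c1 < a1
    rcases le_or_gt a2 c2 with hxb | hxb
    · -- x : N (c1 < a1, a2 ≤ c2)
      rcases le_or_gt b1 d1 with hya | hya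
      · rcases le_or_gt d2 b2 with hyb | hyb
        · -- (N, N') : Pierces A A'
          exact Or.inl (Or.inl (pierces_rect hc ha hd hb hxa.le hxb hya hyb))
        · -- (N, y : b1 ≤ d1, b2 < d2)
          have hm : ((a1, b2) : Pt) ∈ (Icc c1 c2 ×ˢ Icc d1 d2 : Set Pt) := by
            rw [mem_rect]; refine ⟨⟨?_, ?_⟩, ?_, ?_⟩ <;> linarith
          rcases red_TL S hc hd ha hb hA' hm hQS with ⟨g1, g2⟩ | hsing
          · exact absurd g2 (by intro h; linarith)
          · exact Or.inr (Or.inr ⟨(c2, d1), hP'S, by rw [Set.inter_comm]; exact hsing⟩)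
      · -- (N, d1 < b1)
        have hm : ((a2, b1) : Pt) ∈ (Icc c1 c2 ×ˢ Icc d1 d2 : Set Pt) := by
          rw [mem_rect]; refine ⟨⟨?_, ?_⟩, ?_, ?_⟩ <;> linarith
        rcases red_BR S hc hd ha hb hA' hm hPS with ⟨g1, g2⟩ | hsing
        · exact absurd g2 (by intro h; linarith)
        · exact Or.inr (Or.inr ⟨(c1, d2), hQ'S, by rw [Set.inter_comm]; exact hsing⟩)
    · -- x : L (c1 < a1, c2 < a2)
      rcases le_or_gt b2 d2 with hyb | hyb
      · -- b2 ≤ d2 : Q = (a1,b2) ∈ A'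
        have hm : ((a1, b2) : Pt) ∈ (Icc c1 c2 ×ˢ Icc d1 d2 : Set Pt) := by
          rw [mem_rect]; refine ⟨⟨?_, ?_⟩, ?_, ?_⟩ <;> linarith
        rcases red_TL S hc hd ha hb hA' hm hQS with ⟨g1, g2⟩ | hsing
        · exact absurd g1 (by intro h; linarith)
        · exact Or.inr (Or.inr ⟨(c2, d1), hP'S, by rw [Set.inter_comm]; exact hsing⟩)
      · rcases le_or_gt b1 d1 with hya | hya
        · -- (L, y : b1 ≤ d1, d2 < b2) : BR' = (c2,d1) ∈ A
          have hm : ((c2, d1) : Pt) ∈ (Icc a1 a2 ×ˢ Icc b1 b2 : Set Pt) := by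
            rw [mem_rect]; refine ⟨⟨?_, ?_⟩, ?_, ?_⟩ <;> linarith
          rcases red_BR S ha hb hc hd hA hm hP'S with ⟨e1, e2⟩ | hsing
          · exact absurd e1 (by intro h; linarith)
          · exact Or.inr (Or.inr ⟨(a1, b2), hQS, hsing⟩)
        · -- (L, L) : corner intersection, swapped
          refine Or.inr (Or.inl (cornerInter_comm
            (cornerInter_rect2 S hc hd ha hb hxa hxb hya hyb hx2 hy2 ?_ ?_)))
          · intro hS'
            have hm : ((a1, b1) : Pt) ∈ (Icc c1 c2 ×ˢ Icc d1 d2 : Set Pt) ∩ S := by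
              refine ⟨by rw [mem_rect]; refine ⟨⟨?_, ?_⟩, ?_, ?_⟩ <;> linarith, hS'⟩
            rw [hA'] at hm
            rcases hm with h' | h' <;>
              [skip; rw [Set.mem_singleton_iff] at h'] <;>
              rw [Prod.mk.injEq] at h' <;> obtain ⟨e1, e2⟩ := h' <;> linarith
          · intro hS'
            have hm : ((c2, d2) : Pt) ∈ (Icc a1 a2 ×ˢ Icc b1 b2 : Set Pt) ∩ S := by
              refine ⟨by rw [mem_rect]; refine ⟨⟨?_, ?_⟩, ?_, ?_⟩ <;> linarith, hS'⟩
            rw [hA] at hm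
            rcases hm with h' | h' <;>
              [skip; rw [Set.mem_singleton_iff] at h'] <;>
              rw [Prod.mk.injEq] at h' <;> obtain ⟨e1, e2⟩ := h' <;> linarith

lemma normBlue {R B : Set Pt} {A : Set Pt} (h : A ∈ Fam1Blue R B) :
    ∃ a1 a2 b1 b2 : ℝ, a1 ≤ a2 ∧ b1 ≤ b2 ∧ A = Icc a1 a2 ×ˢ Icc b1 b2 ∧
      A ∩ (R ∪ B) = {(a1, b1), (a2, b2)} := by
  obtain ⟨p, q, hp, hq, hpq, hAeq, hAS, hBL⟩ := h
  have hm : ((min p.1 q.1, min p.2 q.2) : Pt) ∈ A := by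
    rw [hAeq]; unfold D
    exact mem_rect.mpr ⟨⟨le_rfl, min_le_max⟩, le_rfl, min_le_max⟩
  have hmem : ((min p.1 q.1, min p.2 q.2) : Pt) ∈ ({p, q} : Set Pt) := hAS ▸ ⟨hm, hBL⟩
  rcases hmem with h' | h'
  · have h1 : min p.1 q.1 = p.1 := congrArg Prod.fst h'
    have h2 : min p.2 q.2 = p.2 := congrArg Prod.snd h'
    have hle1 : p.1 ≤ q.1 := min_eq_left_iff.mp h1
    have hle2 : p.2 ≤ q.2 := min_eq_left_iff.mp h2
    refine ⟨p.1, q.1, p.2, q.2, hle1, hle2, ?_, ?_⟩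
    · rw [hAeq]; unfold D
      simp only [min_eq_left hle1, max_eq_right hle1, min_eq_left hle2, max_eq_right hle2]
      try rfl
    · rw [hAS]
      try simp
  · rw [Set.mem_singleton_iff] at h'
    have h1 : min p.1 q.1 = q.1 := congrArg Prod.fst h'
    have h2 : min p.2 q.2 = q.2 := congrArg Prod.snd h'
    have hle1 : q.1 ≤ p.1 := min_eq_right_iff.mp h1
    have hle2 : q.2 ≤ p.2 := min_eq_right_iff.mp h2
    refine ⟨q.1, p.1, q.2, p.2, hle1, hle2, ?_, ?_⟩
    · rw [hAeq]; unfold D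
      simp only [min_eq_right hle1, max_eq_left hle1, min_eq_right hle2, max_eq_left hle2]
      try rfl
    · rw [hAS, Set.pair_comm]
      try simp
lemma normRed {R B : Set Pt} {A : Set Pt} (h : A ∈ Fam1Red R B) :
    ∃ a1 a2 b1 b2 : ℝ, a1 ≤ a2 ∧ b1 ≤ b2 ∧ A = Icc a1 a2 ×ˢ Icc b1 b2 ∧
      A ∩ (R ∪ B) = {(a2, b1), (a1, b2)} := by
  obtain ⟨p, q, hp, hq, hpq, hAeq, hAS, hBR⟩ := h
  have hm : ((max p.1 q.1, min p.2 q.2) : Pt) ∈ A := by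
    rw [hAeq]; unfold D
    exact mem_rect.mpr ⟨⟨min_le_max, le_rfl⟩, le_rfl, min_le_max⟩
  have hmem : ((max p.1 q.1, min p.2 q.2) : Pt) ∈ ({p, q} : Set Pt) := hAS ▸ ⟨hm, hBR⟩
  rcases hmem with h' | h'
  · have h1 : max p.1 q.1 = p.1 := congrArg Prod.fst h'
    have h2 : min p.2 q.2 = p.2 := congrArg Prod.snd h'
    have hle1 : q.1 ≤ p.1 := max_eq_left_iff.mp h1
    have hle2 : p.2 ≤ q.2 := min_eq_left_iff.mp h2
    refine ⟨q.1, p.1, p.2, q.2, hle1, hle2, ?_, ?_⟩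
    · rw [hAeq]; unfold D
      simp only [min_eq_right hle1, max_eq_left hle1, min_eq_left hle2, max_eq_right hle2]
      try rfl
    · rw [hAS]
      try simp
  · rw [Set.mem_singleton_iff] at h'
    have h1 : max p.1 q.1 = q.1 := congrArg Prod.fst h'
    have h2 : min p.2 q.2 = q.2 := congrArg Prod.snd h'
    have hle1 : p.1 ≤ q.1 := max_eq_right_iff.mp h1
    have hle2 : q.2 ≤ p.2 := min_eq_right_iff.mp h2
    refine ⟨p.1, q.1, q.2, p.2, hle1, hle2, ?_, ?_⟩
    · rw [hAeq]; unfold D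
      simp only [min_eq_left hle1, max_eq_right hle1, min_eq_right hle2, max_eq_left hle2]
      try rfl
    · rw [hAS, Set.pair_comm]
      try simp

/-- Two intersecting distinct rectangles of the same color in
the family `𝓡₁` have a piercing, a corner, or a point intersection
(never a side intersection). -/
theorem stmt5 (R B : Set Pt) (hfin : (R ∪ B).Finite) (hdisj : R ∩ B = ∅)
    (A A' : Set Pt)
    (hcolor : (A ∈ Fam1Blue R B ∧ A' ∈ Fam1Blue R B) ∨
              (A ∈ Fam1Red R B ∧ A' ∈ Fam1Red R B))
    (hne : A ≠ A') (hinter : (A ∩ A').Nonempty) :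
    PiercingInter A A' ∨ CornerInter (R ∪ B) A A' ∨ PointInter (R ∪ B) A A' := by
  rcases hcolor with ⟨h1, h2⟩ | ⟨h1, h2⟩
  · obtain ⟨a1, a2, b1, b2, ha, hb, hAe, hAS⟩ := normBlue h1
    obtain ⟨c1, c2, d1, d2, hc, hd, hA'e, hA'S⟩ := normBlue h2
    subst hAe; subst hA'e
    obtain ⟨z, hz⟩ := hinter
    have hz1 := mem_rect.mp hz.1
    have hz2 := mem_rect.mp hz.2
    exact core_blue (R ∪ B) a1 a2 b1 b2 c1 c2 d1 d2 ha hb hc hd hAS hA'S hne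
      (by linarith [hz1.1.2, hz2.1.1]) (by linarith [hz1.1.1, hz2.1.2])
      (by linarith [hz1.2.2, hz2.2.1]) (by linarith [hz1.2.1, hz2.2.2])
  · obtain ⟨a1, a2, b1, b2, ha, hb, hAe, hAS⟩ := normRed h1
    obtain ⟨c1, c2, d1, d2, hc, hd, hA'e, hA'S⟩ := normRed h2
    subst hAe; subst hA'e
    obtain ⟨z, hz⟩ := hinter
    have hz1 := mem_rect.mp hz.1
    have hz2 := mem_rect.mp hz.2
    exact core_red (R ∪ B) a1 a2 b1 b2 c1 c2 d1 d2 ha hb hc hd hAS hA'S hne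
      (by linarith [hz1.1.2, hz2.1.1]) (by linarith [hz1.1.1, hz2.1.2])
      (by linarith [hz1.2.2, hz2.2.1]) (by linarith [hz1.2.1, hz2.2.2])
end

section
/- Let S = R ∪ B be a two-colored finite point set in ℝ². Then the family R₁ is a complete set of rectangles on S: for every two elements D(a,b) and D(a',b') of R₁ that have a corner intersection, the other two rectangles of the form D(p,q) with p ∈ {a,a'} and q ∈ {b,b'} (which have a piercing intersection with each other) also belong to R₁. -/
open Set

namespace Stmt6

lemma mem_D_iff {a b z : Pt} :
    z ∈ D a b ↔ min a.1 b.1 ≤ z.1 ∧ z.1 ≤ max a.1 b.1 ∧ min a.2 b.2 ≤ z.2 ∧ z.2 ≤ max a.2 b.2 := by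
  rw [D, Set.mem_prod, Set.mem_Icc, Set.mem_Icc]
  tauto

lemma left_mem_D (a b : Pt) : a ∈ D a b :=
  mem_D_iff.mpr ⟨min_le_left _ _, le_max_left _ _, min_le_left _ _, le_max_left _ _⟩

lemma right_mem_D (a b : Pt) : b ∈ D a b :=
  mem_D_iff.mpr ⟨min_le_right _ _, le_max_right _ _, min_le_right _ _, le_max_right _ _⟩

lemma D_comm (a b : Pt) : D a b = D b a := by
  simp [D, min_comm, max_comm]

lemma mem_D_le {a b : Pt} (h1 : a.1 ≤ b.1) (h2 : a.2 ≤ b.2) (z : Pt) :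
    z ∈ D a b ↔ a.1 ≤ z.1 ∧ z.1 ≤ b.1 ∧ a.2 ≤ z.2 ∧ z.2 ≤ b.2 := by
  rw [mem_D_iff, min_eq_left h1, max_eq_right h1, min_eq_left h2, max_eq_right h2]

lemma mem_D_mix {a b : Pt} (h1 : a.1 ≤ b.1) (h2 : b.2 ≤ a.2) (z : Pt) :
    z ∈ D a b ↔ a.1 ≤ z.1 ∧ z.1 ≤ b.1 ∧ b.2 ≤ z.2 ∧ z.2 ≤ a.2 := by
  rw [mem_D_iff, min_eq_left h1, max_eq_right h1, min_eq_right h2, max_eq_left h2]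

lemma fst_image_D (a b : Pt) : Prod.fst '' D a b = Set.Icc (min a.1 b.1) (max a.1 b.1) := by
  rw [D, Set.fst_image_prod]
  exact Set.nonempty_Icc.mpr min_le_max

lemma snd_image_D (a b : Pt) : Prod.snd '' D a b = Set.Icc (min a.2 b.2) (max a.2 b.2) := by
  rw [D, Set.snd_image_prod]
  exact Set.nonempty_Icc.mpr min_le_max

lemma corners_D (a b : Pt) :
    corners (D a b) =
      {c | (c.1 = min a.1 b.1 ∨ c.1 = max a.1 b.1) ∧ (c.2 = min a.2 b.2 ∨ c.2 = max a.2 b.2)} := by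
  unfold corners
  rw [fst_image_D, snd_image_D, csInf_Icc min_le_max, csSup_Icc min_le_max,
    csInf_Icc min_le_max, csSup_Icc min_le_max]

lemma mem_corners_D {a b : Pt} {x y : ℝ} (hx : x = a.1 ∨ x = b.1) (hy : y = a.2 ∨ y = b.2) :
    (x, y) ∈ corners (D a b) := by
  rw [corners_D]
  constructor
  · rcases le_total a.1 b.1 with h | h
    · rcases hx with rfl | rfl
      · exact Or.inl (min_eq_left h).symm
      · exact Or.inr (max_eq_right h).symm
    · rcases hx with rfl | rfl
      · exact Or.inr (max_eq_left h).symm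
      · exact Or.inl (min_eq_right h).symm
  · rcases le_total a.2 b.2 with h | h
    · rcases hy with rfl | rfl
      · exact Or.inl (min_eq_left h).symm
      · exact Or.inr (max_eq_right h).symm
    · rcases hy with rfl | rfl
      · exact Or.inr (max_eq_left h).symm
      · exact Or.inl (min_eq_right h).symm

lemma self_mem_corners_left (a b : Pt) : a ∈ corners (D a b) :=
  mem_corners_D (Or.inl rfl) (Or.inl rfl)

lemma self_mem_corners_right (a b : Pt) : b ∈ corners (D a b) :=
  mem_corners_D (Or.inr rfl) (Or.inr rfl)

/-- canonical blue pair -/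
def BP (R B : Set Pt) (u v : Pt) : Prop :=
  u ∈ B ∧ v ∈ B ∧ u ≠ v ∧ u.1 ≤ v.1 ∧ u.2 ≤ v.2 ∧ D u v ∩ (R ∪ B) = {u, v}

/-- canonical red pair (u is top-left, v bottom-right) -/
def RP (R B : Set Pt) (u v : Pt) : Prop :=
  u ∈ R ∧ v ∈ R ∧ u ≠ v ∧ u.1 ≤ v.1 ∧ v.2 ≤ u.2 ∧ D u v ∩ (R ∪ B) = {u, v}

lemma BP.mem_Fam1 {R B : Set Pt} {u v : Pt} (h : BP R B u v) : D u v ∈ Fam1 R B := by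
  obtain ⟨hu, hv, hne, h1, h2, hemp⟩ := h
  left
  refine ⟨u, v, hu, hv, hne, rfl, hemp, ?_⟩
  have : (min u.1 v.1, min u.2 v.2) = u := by
    rw [min_eq_left h1, min_eq_left h2]
  rw [this]; exact Or.inr hu

lemma RP.mem_Fam1 {R B : Set Pt} {u v : Pt} (h : RP R B u v) : D u v ∈ Fam1 R B := by
  obtain ⟨hu, hv, hne, h1, h2, hemp⟩ := h
  right
  refine ⟨u, v, hu, hv, hne, rfl, hemp, ?_⟩
  have : (max u.1 v.1, min u.2 v.2) = v := by
    rw [max_eq_right h1, min_eq_right h2]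
  rw [this]; exact Or.inl hv

end Stmt6
namespace Stmt6

lemma D_self (a : Pt) {z : Pt} (h : z ∈ D a a) : z = a := by
  rw [mem_D_le le_rfl le_rfl] at h
  exact Prod.ext (le_antisymm h.2.1 h.1) (le_antisymm h.2.2.2 h.2.2.1)

lemma pair_eq {a b p q : Pt} (ha : a = p ∨ a = q) (hb : b = p ∨ b = q) (hab : a ≠ b) :
    (a = p ∧ b = q) ∨ (a = q ∧ b = p) := by
  rcases ha with rfl | rfl <;> rcases hb with rfl | rfl <;> tauto

/-- classification of members of Fam1 -/
lemma classify {R B : Set Pt} {a b : Pt} (hF : D a b ∈ Fam1 R B)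
    (ha : a ∈ R ∪ B) (hb : b ∈ R ∪ B) :
    BP R B a b ∨ BP R B b a ∨ RP R B a b ∨ RP R B b a := by
  rcases hF with ⟨p, q, hp, hq, hpq, hD, hemp, hcn⟩ | ⟨p, q, hp, hq, hpq, hD, hemp, hcn⟩
  · -- blue
    have hane : a ≠ b := by
      rintro rfl
      exact hpq ((D_self a (hD ▸ left_mem_D p q)).trans (D_self a (hD ▸ right_mem_D p q)).symm)
    have hamem : a ∈ ({p, q} : Set Pt) := by rw [← hemp]; exact ⟨hD ▸ left_mem_D a b, ha⟩
    have hbmem : b ∈ ({p, q} : Set Pt) := by rw [← hemp]; exact ⟨hD ▸ right_mem_D a b, hb⟩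
    simp only [Set.mem_insert_iff, Set.mem_singleton_iff] at hamem hbmem
    have hcmem : (min p.1 q.1, min p.2 q.2) ∈ ({p, q} : Set Pt) := by
      rw [← hemp]
      refine ⟨?_, hcn⟩
      rw [hD, mem_D_iff]
      dsimp only
      exact ⟨le_rfl, min_le_max, le_rfl, min_le_max⟩
    simp only [Set.mem_insert_iff, Set.mem_singleton_iff, Prod.ext_iff] at hcmem
    have hor : (p.1 ≤ q.1 ∧ p.2 ≤ q.2) ∨ (q.1 ≤ p.1 ∧ q.2 ≤ p.2) := by
      rcases hcmem with ⟨h1, h2⟩ | ⟨h1, h2⟩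
      · exact Or.inl ⟨min_eq_left_iff.mp h1, min_eq_left_iff.mp h2⟩
      · exact Or.inr ⟨min_eq_right_iff.mp h1, min_eq_right_iff.mp h2⟩
    rcases pair_eq hamem hbmem hane with ⟨rfl, rfl⟩ | ⟨rfl, rfl⟩
    · rcases hor with ⟨h1, h2⟩ | ⟨h1, h2⟩
      · exact Or.inl ⟨hp, hq, hane, h1, h2, hemp⟩
      · refine Or.inr (Or.inl ⟨hq, hp, hane.symm, h1, h2, ?_⟩)
        rw [D_comm b a, hemp]; exact Set.pair_comm a b
    · rcases hor with ⟨h1, h2⟩ | ⟨h1, h2⟩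
      · refine Or.inr (Or.inl ⟨hp, hq, hane.symm, h1, h2, ?_⟩)
        rw [D_comm b a, hemp]
      · refine Or.inl ⟨hq, hp, hane, h1, h2, ?_⟩
        rw [hemp]; exact Set.pair_comm b a
  · -- red
    have hane : a ≠ b := by
      rintro rfl
      exact hpq ((D_self a (hD ▸ left_mem_D p q)).trans (D_self a (hD ▸ right_mem_D p q)).symm)
    have hamem : a ∈ ({p, q} : Set Pt) := by rw [← hemp]; exact ⟨hD ▸ left_mem_D a b, ha⟩
    have hbmem : b ∈ ({p, q} : Set Pt) := by rw [← hemp]; exact ⟨hD ▸ right_mem_D a b, hb⟩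
    simp only [Set.mem_insert_iff, Set.mem_singleton_iff] at hamem hbmem
    have hcmem : (max p.1 q.1, min p.2 q.2) ∈ ({p, q} : Set Pt) := by
      rw [← hemp]
      refine ⟨?_, hcn⟩
      rw [hD, mem_D_iff]
      dsimp only
      exact ⟨min_le_max, le_rfl, le_rfl, min_le_max⟩
    simp only [Set.mem_insert_iff, Set.mem_singleton_iff, Prod.ext_iff] at hcmem
    -- if bottom-right corner is p then canonical red pair is (q, p), else (p, q)
    have hor : (q.1 ≤ p.1 ∧ p.2 ≤ q.2) ∨ (p.1 ≤ q.1 ∧ q.2 ≤ p.2) := by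
      rcases hcmem with ⟨h1, h2⟩ | ⟨h1, h2⟩
      · exact Or.inl ⟨max_eq_left_iff.mp h1, min_eq_left_iff.mp h2⟩
      · exact Or.inr ⟨max_eq_right_iff.mp h1, min_eq_right_iff.mp h2⟩
    rcases pair_eq hamem hbmem hane with ⟨rfl, rfl⟩ | ⟨rfl, rfl⟩
    · rcases hor with ⟨h1, h2⟩ | ⟨h1, h2⟩
      · refine Or.inr (Or.inr (Or.inr ⟨hq, hp, hane.symm, h1, h2, ?_⟩))
        rw [D_comm b a, hemp]; exact Set.pair_comm a b
      · exact Or.inr (Or.inr (Or.inl ⟨hp, hq, hane, h1, h2, hemp⟩))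
    · rcases hor with ⟨h1, h2⟩ | ⟨h1, h2⟩
      · refine Or.inr (Or.inr (Or.inl ⟨hq, hp, hane, h1, h2, ?_⟩))
        rw [hemp]; exact Set.pair_comm b a
      · refine Or.inr (Or.inr (Or.inr ⟨hp, hq, hane.symm, h1, h2, ?_⟩))
        rw [D_comm b a, hemp]

lemma pick_blue {R B : Set Pt} {u v c : Pt} (huB : u ∈ B) (hvB : v ∈ B)
    (h1 : u.1 ≤ v.1) (h2 : u.2 ≤ v.2) (hc : c ∈ corners (D u v)) (hcP : c ∉ R ∪ B) :
    u.1 < v.1 ∧ u.2 < v.2 ∧ (c = (u.1, v.2) ∨ c = (v.1, u.2)) := by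
  rw [corners_D, min_eq_left h1, max_eq_right h1, min_eq_left h2, max_eq_right h2] at hc
  have hP : ∀ z : Pt, c = z → z ∈ B → False := by
    rintro z rfl hz; exact hcP (Or.inr hz)
  obtain ⟨hx, hy⟩ := hc
  rcases hx with hx | hx <;> rcases hy with hy | hy
  · exact (hP u (Prod.ext hx hy) huB).elim
  · -- c = TL = (u.1, v.2)
    refine ⟨lt_of_le_of_ne h1 ?_, lt_of_le_of_ne h2 ?_, Or.inl (Prod.ext hx hy)⟩
    · intro h; exact hP v (Prod.ext (hx.trans h) hy) hvB
    · intro h; exact hP u (Prod.ext hx (hy.trans h.symm)) huB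
  · -- c = BR = (v.1, u.2)
    refine ⟨lt_of_le_of_ne h1 ?_, lt_of_le_of_ne h2 ?_, Or.inr (Prod.ext hx hy)⟩
    · intro h; exact hP u (Prod.ext (hx.trans h.symm) hy) huB
    · intro h; exact hP v (Prod.ext hx (hy.trans h)) hvB
  · exact (hP v (Prod.ext hx hy) hvB).elim

lemma pick_red {R B : Set Pt} {u v c : Pt} (huR : u ∈ R) (hvR : v ∈ R)
    (h1 : u.1 ≤ v.1) (h2 : v.2 ≤ u.2) (hc : c ∈ corners (D u v)) (hcP : c ∉ R ∪ B) :
    u.1 < v.1 ∧ v.2 < u.2 ∧ (c = (u.1, v.2) ∨ c = (v.1, u.2)) := by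
  rw [corners_D, min_eq_left h1, max_eq_right h1, min_eq_right h2, max_eq_left h2] at hc
  have hP : ∀ z : Pt, c = z → z ∈ R → False := by
    rintro z rfl hz; exact hcP (Or.inl hz)
  obtain ⟨hx, hy⟩ := hc
  rcases hx with hx | hx <;> rcases hy with hy | hy
  · -- c = BL = (u.1, v.2)
    refine ⟨lt_of_le_of_ne h1 ?_, lt_of_le_of_ne h2 ?_, Or.inl (Prod.ext hx hy)⟩
    · intro h; exact hP v (Prod.ext (hx.trans h) hy) hvR
    · intro h; exact hP u (Prod.ext hx (hy.trans h)) huR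
  · exact (hP u (Prod.ext hx hy) huR).elim
  · exact (hP v (Prod.ext hx hy) hvR).elim
  · -- c = TR = (v.1, u.2)
    refine ⟨lt_of_le_of_ne h1 ?_, lt_of_le_of_ne h2 ?_, Or.inr (Prod.ext hx hy)⟩
    · intro h; exact hP u (Prod.ext (hx.trans h.symm) hy) huR
    · intro h; exact hP v (Prod.ext hx (hy.trans h.symm)) hvR

lemma CornerInter.symm {P A A' : Set Pt} (h : CornerInter P A A') : CornerInter P A' A :=
  ⟨h.2.1, h.1, fun c hc => h.2.2 c hc.symm⟩

end Stmt6
namespace Stmt6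

section Blue
variable {R B : Set Pt} {u v u' v' : Pt}

/-- main blue configuration: A upper-left, A' lower-right -/
lemma blue_main (hBP : BP R B u v) (hBP' : BP R B u' v')
    (nd1 : u.1 < v.1) (nd2 : u.2 < v.2) (nd1' : u'.1 < v'.1) (nd2' : u'.2 < v'.2)
    (hc : (v.1, u.2) ∈ D u' v') (hc' : (u'.1, v'.2) ∈ D u v)
    (H3 : ∀ c : Pt, ((c ∈ corners (D u' v') ∧ c ∈ D u v) ∨
      (c ∈ corners (D u v) ∧ c ∈ D u' v')) → c ∉ R ∪ B) :
    BP R B u v' ∧ BP R B u' v ∧ ¬ PiercingInter (D u u') (D v v') := by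
  obtain ⟨huB, hvB, hne, hle1, hle2, hemp⟩ := hBP
  obtain ⟨huB', hvB', hne', hle1', hle2', hemp'⟩ := hBP'
  have key : ∀ z : Pt, z ∈ corners (D u v) → z ∈ D u' v' → z ∉ R ∪ B :=
    fun z h1 h2 => H3 z (Or.inr ⟨h1, h2⟩)
  have key' : ∀ z : Pt, z ∈ corners (D u' v') → z ∈ D u v → z ∉ R ∪ B :=
    fun z h1 h2 => H3 z (Or.inl ⟨h1, h2⟩)
  rw [mem_D_le hle1' hle2'] at hc
  rw [mem_D_le hle1 hle2] at hc'
  dsimp only at hc hc'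
  obtain ⟨i1, i2, i3, i4⟩ := hc
  obtain ⟨i5, -, -, i8⟩ := hc'
  have s1 : u.1 < u'.1 := by
    by_contra h; push_neg at h
    exact key u (self_mem_corners_left u v)
      ((mem_D_le hle1' hle2' u).mpr ⟨h, by linarith, by linarith, by linarith⟩) (Or.inr huB)
  have s2 : v'.2 < v.2 := by
    by_contra h; push_neg at h
    exact key v (self_mem_corners_right u v)
      ((mem_D_le hle1' hle2' v).mpr ⟨by linarith, by linarith, by linarith, h⟩) (Or.inr hvB)
  have s3 : u'.2 < u.2 := by
    by_contra h; push_neg at h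
    exact key' u' (self_mem_corners_left u' v')
      ((mem_D_le hle1 hle2 u').mpr ⟨by linarith, by linarith, h, by linarith⟩) (Or.inr huB')
  have s4 : v.1 < v'.1 := by
    by_contra h; push_neg at h
    exact key' v' (self_mem_corners_right u' v')
      ((mem_D_le hle1 hle2 v').mpr ⟨by linarith, h, by linarith, by linarith⟩) (Or.inr hvB')
  refine ⟨⟨huB, hvB', ?_, by linarith, by linarith, ?_⟩,
    ⟨huB', hvB, ?_, by linarith, by linarith, ?_⟩, ?_⟩
  · intro h; have : u.1 = v'.1 := congrArg Prod.fst h; linarith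
  · -- D u v' ∩ (R ∪ B) = {u, v'}
    ext s
    simp only [Set.mem_inter_iff, Set.mem_insert_iff, Set.mem_singleton_iff]
    constructor
    · rintro ⟨hsD, hsP⟩
      rw [mem_D_le (by linarith) (by linarith)] at hsD
      obtain ⟨a1, a2, a3, a4⟩ := hsD
      rcases le_or_gt s.1 v.1 with h | h
      · have hs : s ∈ ({u, v} : Set Pt) := by
          rw [← hemp]
          exact ⟨(mem_D_le hle1 hle2 s).mpr ⟨a1, h, a3, by linarith⟩, hsP⟩
        simp only [Set.mem_insert_iff, Set.mem_singleton_iff] at hs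
        rcases hs with rfl | rfl
        · exact Or.inl rfl
        · exfalso; linarith
      · have hs : s ∈ ({u', v'} : Set Pt) := by
          rw [← hemp']
          exact ⟨(mem_D_le hle1' hle2' s).mpr ⟨by linarith, a2, by linarith, a4⟩, hsP⟩
        simp only [Set.mem_insert_iff, Set.mem_singleton_iff] at hs
        rcases hs with rfl | rfl
        · exfalso; linarith
        · exact Or.inr rfl
    · rintro (rfl | rfl)
      · exact ⟨left_mem_D _ _, Or.inr huB⟩
      · exact ⟨right_mem_D _ _, Or.inr hvB'⟩
  · intro h; have : u'.2 = v.2 := congrArg Prod.snd h; linarith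
  · -- D u' v ∩ (R ∪ B) = {u', v}
    ext s
    simp only [Set.mem_inter_iff, Set.mem_insert_iff, Set.mem_singleton_iff]
    constructor
    · rintro ⟨hsD, hsP⟩
      rw [mem_D_le (by linarith) (by linarith)] at hsD
      obtain ⟨a1, a2, a3, a4⟩ := hsD
      rcases le_or_gt s.2 v'.2 with h | h
      · have hs : s ∈ ({u', v'} : Set Pt) := by
          rw [← hemp']
          exact ⟨(mem_D_le hle1' hle2' s).mpr ⟨a1, by linarith, a3, h⟩, hsP⟩
        simp only [Set.mem_insert_iff, Set.mem_singleton_iff] at hs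
        rcases hs with rfl | rfl
        · exact Or.inl rfl
        · exfalso; linarith
      · have hs : s ∈ ({u, v} : Set Pt) := by
          rw [← hemp]
          exact ⟨(mem_D_le hle1 hle2 s).mpr ⟨by linarith, a2, by linarith, a4⟩, hsP⟩
        simp only [Set.mem_insert_iff, Set.mem_singleton_iff] at hs
        rcases hs with rfl | rfl
        · exfalso; linarith
        · exact Or.inr rfl
    · rintro (rfl | rfl)
      · exact ⟨left_mem_D _ _, Or.inr huB'⟩
      · exact ⟨right_mem_D _ _, Or.inr hvB⟩
  · -- no piercing between D u u' and D v v'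
    rintro (⟨hfst, -⟩ | ⟨hfst, -⟩) <;> rw [fst_image_D, fst_image_D] at hfst
    · have h := hfst (Set.left_mem_Icc.mpr min_le_max)
      rw [Set.mem_Icc, min_eq_left (by linarith : u.1 ≤ u'.1),
        min_eq_left (by linarith : v.1 ≤ v'.1)] at h
      linarith [h.1]
    · have h := hfst (Set.right_mem_Icc.mpr min_le_max)
      rw [Set.mem_Icc, max_eq_right (by linarith : v.1 ≤ v'.1),
        max_eq_right (by linarith : u.1 ≤ u'.1)] at h
      linarith [h.2]

/-- impossible: both contained corners are bottom-right corners -/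
lemma blue_BRBR (hBP : BP R B u v) (hBP' : BP R B u' v')
    (hc : (v.1, u.2) ∈ D u' v') (hc' : (v'.1, u'.2) ∈ D u v)
    (H3 : ∀ c : Pt, ((c ∈ corners (D u' v') ∧ c ∈ D u v) ∨
      (c ∈ corners (D u v) ∧ c ∈ D u' v')) → c ∉ R ∪ B) : False := by
  obtain ⟨huB, hvB, hne, hle1, hle2, hemp⟩ := hBP
  obtain ⟨huB', hvB', hne', hle1', hle2', hemp'⟩ := hBP'
  have key : ∀ z : Pt, z ∈ corners (D u v) → z ∈ D u' v' → z ∉ R ∪ B :=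
    fun z h1 h2 => H3 z (Or.inr ⟨h1, h2⟩)
  have key' : ∀ z : Pt, z ∈ corners (D u' v') → z ∈ D u v → z ∉ R ∪ B :=
    fun z h1 h2 => H3 z (Or.inl ⟨h1, h2⟩)
  rw [mem_D_le hle1' hle2'] at hc
  rw [mem_D_le hle1 hle2] at hc'
  dsimp only at hc hc'
  obtain ⟨i1, i2, i3, i4⟩ := hc
  obtain ⟨i5, i6, i7, i8⟩ := hc'
  -- v.1 = v'.1 and u.2 = u'.2
  have s1 : u'.1 < u.1 := by
    by_contra h; push_neg at h
    exact key' u' (self_mem_corners_left u' v')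
      ((mem_D_le hle1 hle2 u').mpr ⟨h, by linarith, by linarith, by linarith⟩) (Or.inr huB')
  have s2 : v.2 < v'.2 := by
    by_contra h; push_neg at h
    exact key' v' (self_mem_corners_right u' v')
      ((mem_D_le hle1 hle2 v').mpr ⟨by linarith, by linarith, by linarith, h⟩) (Or.inr hvB')
  exact key v (self_mem_corners_right u v)
    ((mem_D_le hle1' hle2' v).mpr ⟨by linarith, by linarith, by linarith, by linarith⟩)
    (Or.inr hvB)

/-- impossible: both contained corners are top-left corners -/
lemma blue_TLTL (hBP : BP R B u v) (hBP' : BP R B u' v')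
    (hc : (u.1, v.2) ∈ D u' v') (hc' : (u'.1, v'.2) ∈ D u v)
    (H3 : ∀ c : Pt, ((c ∈ corners (D u' v') ∧ c ∈ D u v) ∨
      (c ∈ corners (D u v) ∧ c ∈ D u' v')) → c ∉ R ∪ B) : False := by
  obtain ⟨huB, hvB, hne, hle1, hle2, hemp⟩ := hBP
  obtain ⟨huB', hvB', hne', hle1', hle2', hemp'⟩ := hBP'
  have key : ∀ z : Pt, z ∈ corners (D u v) → z ∈ D u' v' → z ∉ R ∪ B :=
    fun z h1 h2 => H3 z (Or.inr ⟨h1, h2⟩)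
  have key' : ∀ z : Pt, z ∈ corners (D u' v') → z ∈ D u v → z ∉ R ∪ B :=
    fun z h1 h2 => H3 z (Or.inl ⟨h1, h2⟩)
  rw [mem_D_le hle1' hle2'] at hc
  rw [mem_D_le hle1 hle2] at hc'
  dsimp only at hc hc'
  obtain ⟨i1, i2, i3, i4⟩ := hc
  obtain ⟨i5, i6, i7, i8⟩ := hc'
  -- u.1 = u'.1 and v.2 = v'.2
  have s1 : u.2 < u'.2 := by
    by_contra h; push_neg at h
    exact key u (self_mem_corners_left u v)
      ((mem_D_le hle1' hle2' u).mpr ⟨by linarith, by linarith, h, by linarith⟩) (Or.inr huB)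
  exact key' u' (self_mem_corners_left u' v')
    ((mem_D_le hle1 hle2 u').mpr ⟨by linarith, by linarith, by linarith, by linarith⟩)
    (Or.inr huB')

lemma core_blue (hBP : BP R B u v) (hBP' : BP R B u' v')
    (hci : CornerInter (R ∪ B) (D u v) (D u' v')) :
    BP R B u v' ∧ BP R B u' v ∧ ¬ PiercingInter (D u u') (D v v') := by
  obtain ⟨⟨c1, ⟨hc1cor, hc1mem⟩, -⟩, ⟨c2, ⟨hc2cor, hc2mem⟩, -⟩, H3⟩ := hci
  have hc1P : c1 ∉ R ∪ B := H3 c1 (Or.inl ⟨hc1cor, hc1mem⟩)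
  have hc2P : c2 ∉ R ∪ B := H3 c2 (Or.inr ⟨hc2cor, hc2mem⟩)
  obtain ⟨nd1, nd2, hor2⟩ :=
    pick_blue (R := R) hBP.1 hBP.2.1 hBP.2.2.2.1 hBP.2.2.2.2.1 hc2cor hc2P
  obtain ⟨nd1', nd2', hor1⟩ :=
    pick_blue (R := R) hBP'.1 hBP'.2.1 hBP'.2.2.2.1 hBP'.2.2.2.2.1 hc1cor hc1P
  rcases hor2 with h2 | h2 <;> rcases hor1 with h1 | h1 <;>
    rw [h2] at hc2mem <;> rw [h1] at hc1mem
  · exact (blue_TLTL hBP hBP' hc2mem hc1mem H3).elim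
  · -- c2 = TL of A, c1 = BR of A' : swapped roles
    obtain ⟨b1, b2, b3⟩ := blue_main hBP' hBP nd1' nd2' nd1 nd2 hc1mem hc2mem
      (fun c h => H3 c h.symm)
    refine ⟨b2, b1, ?_⟩
    rw [D_comm u u', D_comm v v']
    exact b3
  · exact blue_main hBP hBP' nd1 nd2 nd1' nd2' hc2mem hc1mem H3
  · exact (blue_BRBR hBP hBP' hc2mem hc1mem H3).elim

end Blue
end Stmt6
namespace Stmt6

section Red
variable {R B : Set Pt} {u v u' v' : Pt}

/-- main red configuration: A upper-right, A' lower-left -/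
lemma red_main (hRP : RP R B u v) (hRP' : RP R B u' v')
    (nd1 : u.1 < v.1) (nd2 : v.2 < u.2) (nd1' : u'.1 < v'.1) (nd2' : v'.2 < u'.2)
    (hc : (u.1, v.2) ∈ D u' v') (hc' : (v'.1, u'.2) ∈ D u v)
    (H3 : ∀ c : Pt, ((c ∈ corners (D u' v') ∧ c ∈ D u v) ∨
      (c ∈ corners (D u v) ∧ c ∈ D u' v')) → c ∉ R ∪ B) :
    RP R B u v' ∧ RP R B u' v ∧ ¬ PiercingInter (D u u') (D v v') := by
  obtain ⟨huR, hvR, hne, hle1, hle2, hemp⟩ := hRP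
  obtain ⟨huR', hvR', hne', hle1', hle2', hemp'⟩ := hRP'
  have key : ∀ z : Pt, z ∈ corners (D u v) → z ∈ D u' v' → z ∉ R ∪ B :=
    fun z h1 h2 => H3 z (Or.inr ⟨h1, h2⟩)
  have key' : ∀ z : Pt, z ∈ corners (D u' v') → z ∈ D u v → z ∉ R ∪ B :=
    fun z h1 h2 => H3 z (Or.inl ⟨h1, h2⟩)
  rw [mem_D_mix hle1' hle2'] at hc
  rw [mem_D_mix hle1 hle2] at hc'
  dsimp only at hc hc'
  obtain ⟨i1, i2, i3, i4⟩ := hc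
  obtain ⟨-, i6, -, i8⟩ := hc'
  have s1 : u'.2 < u.2 := by
    by_contra h; push_neg at h
    exact key u (self_mem_corners_left u v)
      ((mem_D_mix hle1' hle2' u).mpr ⟨i1, i2, by linarith, h⟩) (Or.inl huR)
  have s2 : v'.1 < v.1 := by
    by_contra h; push_neg at h
    exact key v (self_mem_corners_right u v)
      ((mem_D_mix hle1' hle2' v).mpr ⟨by linarith, h, i3, i4⟩) (Or.inl hvR)
  have s3 : u'.1 < u.1 := by
    by_contra h; push_neg at h
    exact key' u' (self_mem_corners_left u' v')
      ((mem_D_mix hle1 hle2 u').mpr ⟨h, by linarith, i4, i8⟩) (Or.inl huR')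
  have s4 : v'.2 < v.2 := by
    by_contra h; push_neg at h
    exact key' v' (self_mem_corners_right u' v')
      ((mem_D_mix hle1 hle2 v').mpr ⟨i2, i6, h, by linarith⟩) (Or.inl hvR')
  refine ⟨⟨huR, hvR', ?_, by linarith, by linarith, ?_⟩,
    ⟨huR', hvR, ?_, by linarith, by linarith, ?_⟩, ?_⟩
  · intro h; have : u.2 = v'.2 := congrArg Prod.snd h; linarith
  · -- D u v' ∩ (R ∪ B) = {u, v'}
    ext s
    simp only [Set.mem_inter_iff, Set.mem_insert_iff, Set.mem_singleton_iff]
    constructor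
    · rintro ⟨hsD, hsP⟩
      rw [mem_D_mix (by linarith) (by linarith)] at hsD
      obtain ⟨a1, a2, a3, a4⟩ := hsD
      rcases le_or_gt v.2 s.2 with h | h
      · have hs : s ∈ ({u, v} : Set Pt) := by
          rw [← hemp]
          exact ⟨(mem_D_mix hle1 hle2 s).mpr ⟨a1, by linarith, h, a4⟩, hsP⟩
        simp only [Set.mem_insert_iff, Set.mem_singleton_iff] at hs
        rcases hs with rfl | rfl
        · exact Or.inl rfl
        · exfalso; linarith
      · have hs : s ∈ ({u', v'} : Set Pt) := by
          rw [← hemp']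
          exact ⟨(mem_D_mix hle1' hle2' s).mpr ⟨by linarith, a2, a3, by linarith⟩, hsP⟩
        simp only [Set.mem_insert_iff, Set.mem_singleton_iff] at hs
        rcases hs with rfl | rfl
        · exfalso; linarith
        · exact Or.inr rfl
    · rintro (rfl | rfl)
      · exact ⟨left_mem_D _ _, Or.inl huR⟩
      · exact ⟨right_mem_D _ _, Or.inl hvR'⟩
  · intro h; have : u'.1 = v.1 := congrArg Prod.fst h; linarith
  · -- D u' v ∩ (R ∪ B) = {u', v}
    ext s
    simp only [Set.mem_inter_iff, Set.mem_insert_iff, Set.mem_singleton_iff]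
    constructor
    · rintro ⟨hsD, hsP⟩
      rw [mem_D_mix (by linarith) (by linarith)] at hsD
      obtain ⟨a1, a2, a3, a4⟩ := hsD
      rcases le_or_gt s.1 v'.1 with h | h
      · have hs : s ∈ ({u', v'} : Set Pt) := by
          rw [← hemp']
          exact ⟨(mem_D_mix hle1' hle2' s).mpr ⟨a1, h, by linarith, a4⟩, hsP⟩
        simp only [Set.mem_insert_iff, Set.mem_singleton_iff] at hs
        rcases hs with rfl | rfl
        · exact Or.inl rfl
        · exfalso; linarith
      · have hs : s ∈ ({u, v} : Set Pt) := by
          rw [← hemp]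
          exact ⟨(mem_D_mix hle1 hle2 s).mpr ⟨by linarith, a2, a3, by linarith⟩, hsP⟩
        simp only [Set.mem_insert_iff, Set.mem_singleton_iff] at hs
        rcases hs with rfl | rfl
        · exfalso; linarith
        · exact Or.inr rfl
    · rintro (rfl | rfl)
      · exact ⟨left_mem_D _ _, Or.inl huR'⟩
      · exact ⟨right_mem_D _ _, Or.inl hvR⟩
  · -- no piercing between D u u' and D v v'
    rintro (⟨hfst, -⟩ | ⟨hfst, -⟩) <;> rw [fst_image_D, fst_image_D] at hfst
    · have h := hfst (Set.left_mem_Icc.mpr min_le_max)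
      rw [Set.mem_Icc, min_eq_right (by linarith : u'.1 ≤ u.1),
        min_eq_right (by linarith : v'.1 ≤ v.1)] at h
      linarith [h.1]
    · have h := hfst (Set.right_mem_Icc.mpr min_le_max)
      rw [Set.mem_Icc, max_eq_left (by linarith : v'.1 ≤ v.1),
        max_eq_left (by linarith : u'.1 ≤ u.1)] at h
      linarith [h.2]

/-- impossible: both contained corners are bottom-left corners -/
lemma red_BLBL (hRP : RP R B u v) (hRP' : RP R B u' v')
    (hc : (u.1, v.2) ∈ D u' v') (hc' : (u'.1, v'.2) ∈ D u v)
    (H3 : ∀ c : Pt, ((c ∈ corners (D u' v') ∧ c ∈ D u v) ∨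
      (c ∈ corners (D u v) ∧ c ∈ D u' v')) → c ∉ R ∪ B) : False := by
  obtain ⟨huR, hvR, hne, hle1, hle2, hemp⟩ := hRP
  obtain ⟨huR', hvR', hne', hle1', hle2', hemp'⟩ := hRP'
  have key : ∀ z : Pt, z ∈ corners (D u v) → z ∈ D u' v' → z ∉ R ∪ B :=
    fun z h1 h2 => H3 z (Or.inr ⟨h1, h2⟩)
  have key' : ∀ z : Pt, z ∈ corners (D u' v') → z ∈ D u v → z ∉ R ∪ B :=
    fun z h1 h2 => H3 z (Or.inl ⟨h1, h2⟩)
  rw [mem_D_mix hle1' hle2'] at hc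
  rw [mem_D_mix hle1 hle2] at hc'
  dsimp only at hc hc'
  obtain ⟨i1, i2, i3, i4⟩ := hc
  obtain ⟨i5, i6, i7, i8⟩ := hc'
  -- u.1 = u'.1 and v.2 = v'.2
  have s1 : u.2 < u'.2 := by
    by_contra h; push_neg at h
    exact key' u' (self_mem_corners_left u' v')
      ((mem_D_mix hle1 hle2 u').mpr ⟨i5, i6, i4, h⟩) (Or.inl huR')
  exact key u (self_mem_corners_left u v)
    ((mem_D_mix hle1' hle2' u).mpr ⟨i1, i2, by linarith, by linarith⟩) (Or.inl huR)

/-- impossible: both contained corners are top-right corners -/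
lemma red_TRTR (hRP : RP R B u v) (hRP' : RP R B u' v')
    (hc : (v.1, u.2) ∈ D u' v') (hc' : (v'.1, u'.2) ∈ D u v)
    (H3 : ∀ c : Pt, ((c ∈ corners (D u' v') ∧ c ∈ D u v) ∨
      (c ∈ corners (D u v) ∧ c ∈ D u' v')) → c ∉ R ∪ B) : False := by
  obtain ⟨huR, hvR, hne, hle1, hle2, hemp⟩ := hRP
  obtain ⟨huR', hvR', hne', hle1', hle2', hemp'⟩ := hRP'
  have key : ∀ z : Pt, z ∈ corners (D u v) → z ∈ D u' v' → z ∉ R ∪ B :=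
    fun z h1 h2 => H3 z (Or.inr ⟨h1, h2⟩)
  have key' : ∀ z : Pt, z ∈ corners (D u' v') → z ∈ D u v → z ∉ R ∪ B :=
    fun z h1 h2 => H3 z (Or.inl ⟨h1, h2⟩)
  rw [mem_D_mix hle1' hle2'] at hc
  rw [mem_D_mix hle1 hle2] at hc'
  dsimp only at hc hc'
  obtain ⟨i1, i2, i3, i4⟩ := hc
  obtain ⟨i5, i6, i7, i8⟩ := hc'
  -- v.1 = v'.1 and u.2 = u'.2
  have s1 : v.2 < v'.2 := by
    by_contra h; push_neg at h
    exact key v (self_mem_corners_right u v)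
      ((mem_D_mix hle1' hle2' v).mpr ⟨by linarith, by linarith, h, by linarith⟩) (Or.inl hvR)
  have s2 : u'.1 < u.1 := by
    by_contra h; push_neg at h
    exact key' u' (self_mem_corners_left u' v')
      ((mem_D_mix hle1 hle2 u').mpr ⟨h, by linarith, by linarith, i8⟩) (Or.inl huR')
  exact key u (self_mem_corners_left u v)
    ((mem_D_mix hle1' hle2' u).mpr ⟨by linarith, by linarith, by linarith, by linarith⟩)
    (Or.inl huR)

lemma core_red (hRP : RP R B u v) (hRP' : RP R B u' v')
    (hci : CornerInter (R ∪ B) (D u v) (D u' v')) :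
    RP R B u v' ∧ RP R B u' v ∧ ¬ PiercingInter (D u u') (D v v') := by
  obtain ⟨⟨c1, ⟨hc1cor, hc1mem⟩, -⟩, ⟨c2, ⟨hc2cor, hc2mem⟩, -⟩, H3⟩ := hci
  have hc1P : c1 ∉ R ∪ B := H3 c1 (Or.inl ⟨hc1cor, hc1mem⟩)
  have hc2P : c2 ∉ R ∪ B := H3 c2 (Or.inr ⟨hc2cor, hc2mem⟩)
  obtain ⟨nd1, nd2, hor2⟩ :=
    pick_red (B := B) hRP.1 hRP.2.1 hRP.2.2.2.1 hRP.2.2.2.2.1 hc2cor hc2P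
  obtain ⟨nd1', nd2', hor1⟩ :=
    pick_red (B := B) hRP'.1 hRP'.2.1 hRP'.2.2.2.1 hRP'.2.2.2.2.1 hc1cor hc1P
  rcases hor2 with h2 | h2 <;> rcases hor1 with h1 | h1 <;>
    rw [h2] at hc2mem <;> rw [h1] at hc1mem
  · exact (red_BLBL hRP hRP' hc2mem hc1mem H3).elim
  · exact red_main hRP hRP' nd1 nd2 nd1' nd2' hc2mem hc1mem H3
  · -- c2 = TR of A, c1 = BL of A' : swapped roles
    obtain ⟨b1, b2, b3⟩ := red_main hRP' hRP nd1' nd2' nd1 nd2 hc1mem hc2mem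
      (fun c h => H3 c h.symm)
    refine ⟨b2, b1, ?_⟩
    rw [D_comm u u', D_comm v v']
    exact b3
  · exact (red_TRTR hRP hRP' hc2mem hc1mem H3).elim

end Red
end Stmt6
namespace Stmt6

variable {R B : Set Pt} {u v p q : Pt}

lemma no_mixed (hdisj : R ∩ B = ∅) (hBP : BP R B u v) (hRP : RP R B p q) :
    ¬ CornerInter (R ∪ B) (D u v) (D p q) := by
  intro hci
  obtain ⟨⟨c1, ⟨hc1cor, hc1mem⟩, -⟩, ⟨c2, ⟨hc2cor, hc2mem⟩, -⟩, H3⟩ := hci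
  have hc1P : c1 ∉ R ∪ B := H3 c1 (Or.inl ⟨hc1cor, hc1mem⟩)
  have hc2P : c2 ∉ R ∪ B := H3 c2 (Or.inr ⟨hc2cor, hc2mem⟩)
  obtain ⟨huB, hvB, hne, hle1, hle2, hemp⟩ := hBP
  obtain ⟨hpR, hqR, hne', hle1', hle2', hemp'⟩ := hRP
  obtain ⟨nd1, nd2, hor2⟩ := pick_blue (R := R) huB hvB hle1 hle2 hc2cor hc2P
  obtain ⟨nd1', nd2', hor1⟩ := pick_red (B := B) hpR hqR hle1' hle2' hc1cor hc1P
  have hnotRB : ∀ z : Pt, z ∈ R → z ∈ B → False := by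
    intro z h1 h2
    have : z ∈ R ∩ B := ⟨h1, h2⟩
    rw [hdisj] at this
    exact this
  have hA : ∀ z : Pt, z ∈ D u v → z ∈ R → False := by
    intro z hz hzR
    have hz2 : z ∈ ({u, v} : Set Pt) := by rw [← hemp]; exact ⟨hz, Or.inl hzR⟩
    simp only [Set.mem_insert_iff, Set.mem_singleton_iff] at hz2
    rcases hz2 with rfl | rfl
    · exact hnotRB z hzR huB
    · exact hnotRB z hzR hvB
  have hA' : ∀ z : Pt, z ∈ D p q → z ∈ B → False := by
    intro z hz hzB
    have hz2 : z ∈ ({p, q} : Set Pt) := by rw [← hemp']; exact ⟨hz, Or.inr hzB⟩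
    simp only [Set.mem_insert_iff, Set.mem_singleton_iff] at hz2
    rcases hz2 with rfl | rfl
    · exact hnotRB z hpR hzB
    · exact hnotRB z hqR hzB
  rcases hor2 with h2 | h2 <;> rcases hor1 with h1 | h1 <;>
    rw [h2] at hc2mem <;> rw [h1] at hc1mem <;>
    rw [mem_D_mix hle1' hle2'] at hc2mem <;> rw [mem_D_le hle1 hle2] at hc1mem <;>
    dsimp only at hc2mem hc1mem
  · -- c2 = TL(A), c1 = BL(A')
    obtain ⟨i1, i2, i3, i4⟩ := hc2mem
    obtain ⟨i5, i6, i7, i8⟩ := hc1mem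
    rcases le_or_gt q.2 u.2 with h | h
    · exact hA' u ((mem_D_mix hle1' hle2' u).mpr ⟨by linarith, by linarith, h, by linarith⟩) huB
    · rcases le_or_gt q.1 v.1 with h' | h'
      · exact hA q ((mem_D_le hle1 hle2 q).mpr ⟨by linarith, h', by linarith, by linarith⟩) hqR
      · exact hA' v ((mem_D_mix hle1' hle2' v).mpr
          ⟨by linarith, by linarith, by linarith, by linarith⟩) hvB
  · -- c2 = TL(A), c1 = TR(A')
    obtain ⟨i1, i2, i3, i4⟩ := hc2mem
    obtain ⟨i5, i6, i7, i8⟩ := hc1mem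
    rcases le_or_gt q.2 u.2 with h | h
    · exact hA' u ((mem_D_mix hle1' hle2' u).mpr ⟨by linarith, by linarith, h, by linarith⟩) huB
    · exact hA q ((mem_D_le hle1 hle2 q).mpr ⟨by linarith, by linarith, by linarith, by linarith⟩) hqR
  · -- c2 = BR(A), c1 = BL(A')
    obtain ⟨i1, i2, i3, i4⟩ := hc2mem
    obtain ⟨i5, i6, i7, i8⟩ := hc1mem
    rcases le_or_gt p.2 v.2 with h | h
    · exact hA p ((mem_D_le hle1 hle2 p).mpr ⟨by linarith, by linarith, by linarith, h⟩) hpR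
    · exact hA' v ((mem_D_mix hle1' hle2' v).mpr
        ⟨by linarith, by linarith, by linarith, by linarith⟩) hvB
  · -- c2 = BR(A), c1 = TR(A')
    obtain ⟨i1, i2, i3, i4⟩ := hc2mem
    obtain ⟨i5, i6, i7, i8⟩ := hc1mem
    rcases le_or_gt p.1 u.1 with h | h
    · exact hA' u ((mem_D_mix hle1' hle2' u).mpr ⟨h, by linarith, by linarith, by linarith⟩) huB
    · exact hA p ((mem_D_le hle1 hle2 p).mpr ⟨by linarith, by linarith, by linarith, by linarith⟩) hpR

end Stmt6
/-- The family `𝓡₁` is a complete set of rectangles on `S = R ∪ B`. -/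
theorem stmt6 (R B : Set Pt) (hfin : (R ∪ B).Finite) (hdisj : R ∩ B = ∅) :
    CompleteOn (R ∪ B) (Fam1 R B) := by
  open Stmt6 in
  constructor
  · rintro A (⟨p, q, hp, hq, hne, rfl, hemp, -⟩ | ⟨p, q, hp, hq, hne, rfl, hemp, -⟩)
    · exact ⟨p, q, Or.inr hp, Or.inr hq, hne, rfl, hemp⟩
    · exact ⟨p, q, Or.inl hp, Or.inl hq, hne, rfl, hemp⟩
  · intro a b a' b' ha hb ha' hb' hF hF' hci hpi
    rcases classify hF ha hb with hab | hab | hab | hab <;>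
      rcases classify hF' ha' hb' with hab' | hab' | hab' | hab'
    · -- BP a b, BP a' b'
      obtain ⟨x1, x2, -⟩ := core_blue hab hab' hci
      exact ⟨x1.mem_Fam1, x2.mem_Fam1⟩
    · -- BP a b, BP b' a'
      rw [D_comm a' b'] at hci
      obtain ⟨-, -, h3⟩ := core_blue hab hab' hci
      exfalso; apply h3
      rw [D_comm b a']
      exact hpi
    · -- BP a b, RP a' b'
      exact absurd hci (no_mixed hdisj hab hab')
    · -- BP a b, RP b' a'
      rw [D_comm a' b'] at hci
      exact absurd hci (no_mixed hdisj hab hab')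
    · -- BP b a, BP a' b'
      rw [D_comm a b] at hci
      obtain ⟨-, -, h3⟩ := core_blue hab hab' hci
      exfalso; apply h3
      rw [D_comm b a']
      unfold PiercingInter at hpi ⊢
      exact hpi.symm
    · -- BP b a, BP b' a'
      rw [D_comm a b, D_comm a' b'] at hci
      obtain ⟨x1, x2, -⟩ := core_blue hab hab' hci
      constructor
      · rw [D_comm a b']; exact x2.mem_Fam1
      · rw [D_comm a' b]; exact x1.mem_Fam1
    · -- BP b a, RP a' b'
      rw [D_comm a b] at hci
      exact absurd hci (no_mixed hdisj hab hab')
    · -- BP b a, RP b' a'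
      rw [D_comm a b, D_comm a' b'] at hci
      exact absurd hci (no_mixed hdisj hab hab')
    · -- RP a b, BP a' b'
      exact absurd (Stmt6.CornerInter.symm hci) (no_mixed hdisj hab' hab)
    · -- RP a b, BP b' a'
      rw [D_comm a' b'] at hci
      exact absurd (Stmt6.CornerInter.symm hci) (no_mixed hdisj hab' hab)
    · -- RP a b, RP a' b'
      obtain ⟨x1, x2, -⟩ := core_red hab hab' hci
      exact ⟨x1.mem_Fam1, x2.mem_Fam1⟩
    · -- RP a b, RP b' a'
      rw [D_comm a' b'] at hci
      obtain ⟨-, -, h3⟩ := core_red hab hab' hci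
      exfalso; apply h3
      rw [D_comm b a']
      exact hpi
    · -- RP b a, BP a' b'
      rw [D_comm a b] at hci
      exact absurd (Stmt6.CornerInter.symm hci) (no_mixed hdisj hab' hab)
    · -- RP b a, BP b' a'
      rw [D_comm a b, D_comm a' b'] at hci
      exact absurd (Stmt6.CornerInter.symm hci) (no_mixed hdisj hab' hab)
    · -- RP b a, RP a' b'
      rw [D_comm a b] at hci
      obtain ⟨-, -, h3⟩ := core_red hab hab' hci
      exfalso; apply h3
      rw [D_comm b a']
      unfold PiercingInter at hpi ⊢
      exact hpi.symm
    · -- RP b a, RP b' a'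
      rw [D_comm a b, D_comm a' b'] at hci
      obtain ⟨x1, x2, -⟩ := core_red hab hab' hci
      constructor
      · rw [D_comm a b']; exact x2.mem_Fam1
      · rw [D_comm a' b]; exact x1.mem_Fam1
end

section
/- Let S = R ∪ B be a two-colored finite point set in ℝ² and let H ⊆ R₁ be a set of rectangles such that no two elements of H have a piercing intersection or a corner intersection. Then the intersection graph G(H) (vertex set H, two rectangles adjacent if and only if they are distinct and their intersection is nonempty) contains no cycle, i.e., it is a forest. -/
open Set

/-- The intersection graph of a family `H` of rectangles: two rectangles are
adjacent iff they are distinct and their intersection is nonempty. -/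
def interGraph (H : Set (Set Pt)) : SimpleGraph H where
  Adj A B := A ≠ B ∧ ((A : Set Pt) ∩ (B : Set Pt)).Nonempty
  symm := by
    constructor
    intro A B h
    exact ⟨h.1.symm, by rw [Set.inter_comm]; exact h.2⟩
  loopless := by
    constructor
    intro A h
    exact h.1 rfl

/-!
Two rectangles of `𝓡₁` that meet without a piercing or a corner intersection share a defining
point: compare their projections on each axis; if they are nested on both axes, the rectangles
are piercing or one contains the other and its defining points; if they cross on both axes, the
rectangles have a corner intersection; otherwise a side of one rectangle, hence one of its
defining points, lies in the other.

A rectangle of `𝓡₁` contains no point of `S` besides its two defining points, and its colour fixes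
the diagonal they span. So two of them sharing their lower point (or their upper point) are
nested, hence equal, or pierce each other, and the point shared by two adjacent rectangles is the
upper point of one and the lower point of the other. Ordering the rectangles by the potential
`x + y` (blue) or `y - x` (red) of their lower points, each rectangle thus has at most one lower
neighbour, the one whose upper point is its lower point; a cycle has two at its highest rectangle.
-/

open scoped Interval

namespace SimpleGraph

-- A cycle would give two distinct lower neighbours to its highest vertex.
theorem isAcyclic_of_lower_neighbor_unique {V α : Type*} [LinearOrder α] {G : SimpleGraph V}
    (f : V → α) (hne : ∀ ⦃u v⦄, G.Adj u v → f u ≠ f v)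
    (huniq : ∀ ⦃u v w⦄, G.Adj u v → G.Adj u w → f v < f u → f w < f u → v = w) :
    G.IsAcyclic := by
  classical
  intro v c hc
  obtain ⟨u, hu, hmax⟩ := c.support.toFinset.exists_max_image f ⟨v, by simp⟩
  rw [List.mem_toFinset] at hu
  have hc' := hc.rotate hu
  set c' := c.rotate u hu
  have hlt : ∀ w ∈ c'.support, G.Adj u w → f w < f u := fun w hw hadj =>
    lt_of_le_of_ne (hmax w (by simpa [c', Walk.mem_support_rotate_iff] using hw))
      (hne hadj).symm
  refine hc'.snd_ne_penultimate (huniq (c'.adj_snd hc'.not_nil)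
    (c'.adj_penultimate hc'.not_nil).symm ?_ ?_)
  · exact hlt _ (c'.getVert_mem_support 1) (c'.adj_snd hc'.not_nil)
  · exact hlt _ (c'.getVert_mem_support _) (c'.adj_penultimate hc'.not_nil).symm

end SimpleGraph

lemma existsUnique_prod {α β : Type*} {p : α → Prop} {q : β → Prop} (hp : ∃! x, p x)
    (hq : ∃! y, q y) : ∃! z : α × β, p z.1 ∧ q z.2 := by
  obtain ⟨x, hx, hx'⟩ := hp
  obtain ⟨y, hy, hy'⟩ := hq
  exact ⟨(x, y), ⟨hx, hy⟩, fun z hz => Prod.ext (hx' _ hz.1) (hy' _ hz.2)⟩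

lemma existsUnique_eq_or_eq_mem {α : Type*} {a b : α} {s : Set α} (h : a ∈ s ∨ b ∈ s)
    (h' : ¬ (a ∈ s ∧ b ∈ s)) : ∃! e, (e = a ∨ e = b) ∧ e ∈ s := by
  rcases h with ha | hb
  · exact ⟨a, ⟨.inl rfl, ha⟩, fun e ⟨he, hes⟩ =>
      he.resolve_right (by rintro rfl; exact h' ⟨ha, hes⟩)⟩
  · exact ⟨b, ⟨.inr rfl, hb⟩, fun e ⟨he, hes⟩ =>
      he.resolve_left (by rintro rfl; exact h' ⟨hes, hb⟩)⟩

section Intervals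

variable {α : Type*} [LinearOrder α] {a b c d : α}

def Crossing (a b c d : α) : Prop :=
  (∃! e, (e = a ∨ e = b) ∧ e ∈ [[c, d]]) ∧ (∃! e, (e = c ∨ e = d) ∧ e ∈ [[a, b]])

lemma eq_min_or_eq_max_iff {x : α} : x = min a b ∨ x = max a b ↔ x = a ∨ x = b := by
  rcases le_total a b with h | h <;> simp [h, or_comm]

lemma uIcc_subset_uIcc_of_notMem (ha : a ∉ [[c, d]]) (hb : b ∉ [[c, d]])
    (h : ([[a, b]] ∩ [[c, d]]).Nonempty) : [[c, d]] ⊆ [[a, b]] := by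
  obtain ⟨z, hz, hz'⟩ := h
  rw [uIcc_subset_uIcc_iff_mem]
  simp only [mem_uIcc] at *
  grind

lemma uIcc_subset_or_crossing (h : ([[a, b]] ∩ [[c, d]]).Nonempty) :
    [[a, b]] ⊆ [[c, d]] ∨ [[c, d]] ⊆ [[a, b]] ∨ Crossing a b c d := by
  simp only [uIcc_subset_uIcc_iff_mem]
  by_cases hab : a ∈ [[c, d]] ∧ b ∈ [[c, d]]
  · exact .inl hab
  by_cases hcd : c ∈ [[a, b]] ∧ d ∈ [[a, b]]
  · exact .inr (.inl hcd)
  refine .inr (.inr ⟨existsUnique_eq_or_eq_mem ?_ hab, existsUnique_eq_or_eq_mem ?_ hcd⟩)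
  · by_contra! hn
    exact hcd (uIcc_subset_uIcc_iff_mem.1 (uIcc_subset_uIcc_of_notMem hn.1 hn.2 h))
  · by_contra! hn
    rw [inter_comm] at h
    exact hab (uIcc_subset_uIcc_iff_mem.1 (uIcc_subset_uIcc_of_notMem hn.1 hn.2 h))

lemma uIcc_subset_or_supset_of_same_side {s u v : α} (h : s ≤ u ∧ s ≤ v ∨ u ≤ s ∧ v ≤ s) :
    [[s, u]] ⊆ [[s, v]] ∨ [[s, v]] ⊆ [[s, u]] := by
  simp only [uIcc_subset_uIcc_iff_mem, left_mem_uIcc, true_and, mem_uIcc]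
  grind

end Intervals

lemma sInf_uIcc {α : Type*} [ConditionallyCompleteLinearOrder α] (x y : α) :
    sInf [[x, y]] = min x y :=
  csInf_Icc min_le_max

lemma sSup_uIcc {α : Type*} [ConditionallyCompleteLinearOrder α] (x y : α) :
    sSup [[x, y]] = max x y :=
  csSup_Icc min_le_max

section Rectangles

variable {P : Set Pt} {a b c d : Pt}

lemma D_eq_prod (a b : Pt) : D a b = [[a.1, b.1]] ×ˢ [[a.2, b.2]] := rfl

lemma D_comm (a b : Pt) : D a b = D b a := by
  rw [D_eq_prod, D_eq_prod, uIcc_comm a.1, uIcc_comm a.2]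

lemma left_mem_D (a b : Pt) : a ∈ D a b := ⟨left_mem_uIcc, left_mem_uIcc⟩

lemma right_mem_D (a b : Pt) : b ∈ D a b := ⟨right_mem_uIcc, right_mem_uIcc⟩

lemma fst_image_D (a b : Pt) : Prod.fst '' D a b = [[a.1, b.1]] :=
  fst_image_prod _ nonempty_uIcc

lemma snd_image_D (a b : Pt) : Prod.snd '' D a b = [[a.2, b.2]] :=
  snd_image_prod nonempty_uIcc _

lemma pierces_D_iff :
    Pierces (D a b) (D c d) ↔ [[a.1, b.1]] ⊆ [[c.1, d.1]] ∧ [[c.2, d.2]] ⊆ [[a.2, b.2]] := by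
  rw [Pierces, fst_image_D, fst_image_D, snd_image_D, snd_image_D]

lemma corners_D (a b : Pt) :
    corners (D a b) = {z | (z.1 = a.1 ∨ z.1 = b.1) ∧ (z.2 = a.2 ∨ z.2 = b.2)} := by
  simp only [corners, fst_image_D, snd_image_D, sInf_uIcc, sSup_uIcc, eq_min_or_eq_max_iff]

lemma corners_subset_D (a b : Pt) : corners (D a b) ⊆ D a b := by
  rw [corners_D]
  rintro z ⟨hx, hy⟩
  constructor
  · rcases hx with h | h <;> rw [h]; exacts [left_mem_uIcc, right_mem_uIcc]
  · rcases hy with h | h <;> rw [h]; exacts [left_mem_uIcc, right_mem_uIcc]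

lemma existsUnique_corner_mem (hx : ∃! e, (e = c.1 ∨ e = d.1) ∧ e ∈ [[a.1, b.1]])
    (hy : ∃! e, (e = c.2 ∨ e = d.2) ∧ e ∈ [[a.2, b.2]]) :
    ∃! z, z ∈ corners (D c d) ∧ z ∈ D a b := by
  rw [corners_D, D_eq_prod]
  simpa only [mem_ofPred_eq, mem_prod, and_and_and_comm] using existsUnique_prod hx hy

lemma cornerInter_D_of_crossing (hx : Crossing a.1 b.1 c.1 d.1) (hy : Crossing a.2 b.2 c.2 d.2)
    (hP : ∀ s ∈ P, s ∉ D a b ∩ D c d) : CornerInter P (D a b) (D c d) := by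
  refine ⟨existsUnique_corner_mem hx.2 hy.2, existsUnique_corner_mem hx.1 hy.1, ?_⟩
  rintro z (⟨hzc, hz⟩ | ⟨hzc, hz⟩) hzP
  · exact hP z hzP ⟨hz, corners_subset_D c d hzc⟩
  · exact hP z hzP ⟨corners_subset_D a b hzc, hz⟩

lemma mem_D_or_mem_D_of_fst (h : ∃ e, (e = a.1 ∨ e = b.1) ∧ e ∈ [[c.1, d.1]])
    (hy : [[a.2, b.2]] ⊆ [[c.2, d.2]]) : a ∈ D c d ∨ b ∈ D c d := by
  obtain ⟨e, rfl | rfl, he⟩ := h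
  exacts [.inl ⟨he, hy left_mem_uIcc⟩, .inr ⟨he, hy right_mem_uIcc⟩]

lemma mem_D_or_mem_D_of_snd (h : ∃ e, (e = a.2 ∨ e = b.2) ∧ e ∈ [[c.2, d.2]])
    (hx : [[a.1, b.1]] ⊆ [[c.1, d.1]]) : a ∈ D c d ∨ b ∈ D c d := by
  obtain ⟨e, rfl | rfl, he⟩ := h
  exacts [.inl ⟨hx left_mem_uIcc, he⟩, .inr ⟨hx right_mem_uIcc, he⟩]

theorem exists_mem_inter_D (ha : a ∈ P) (hb : b ∈ P) (hc : c ∈ P) (hd : d ∈ P)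
    (hinter : (D a b ∩ D c d).Nonempty) (hpierce : ¬ PiercingInter (D a b) (D c d))
    (hcorner : ¬ CornerInter P (D a b) (D c d)) : ∃ s ∈ P, s ∈ D a b ∩ D c d := by
  by_contra! hP
  have hab : ¬ (a ∈ D c d ∨ b ∈ D c d) := by
    rintro (h | h)
    exacts [hP a ha ⟨left_mem_D a b, h⟩, hP b hb ⟨right_mem_D a b, h⟩]
  have hcd : ¬ (c ∈ D a b ∨ d ∈ D a b) := by
    rintro (h | h)
    exacts [hP c hc ⟨h, left_mem_D c d⟩, hP d hd ⟨h, right_mem_D c d⟩]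
  obtain ⟨z, ⟨hzx, hzy⟩, hzx', hzy'⟩ := hinter
  rcases uIcc_subset_or_crossing ⟨z.1, hzx, hzx'⟩ with hx | hx | hx <;>
    rcases uIcc_subset_or_crossing ⟨z.2, hzy, hzy'⟩ with hy | hy | hy
  · exact hab (.inl ⟨hx left_mem_uIcc, hy left_mem_uIcc⟩)
  · exact hpierce (.inl (pierces_D_iff.2 ⟨hx, hy⟩))
  · exact hab (mem_D_or_mem_D_of_snd hy.1.exists hx)
  · exact hpierce (.inr (pierces_D_iff.2 ⟨hx, hy⟩))
  · exact hcd (.inl ⟨hx left_mem_uIcc, hy left_mem_uIcc⟩)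
  · exact hcd (mem_D_or_mem_D_of_snd hy.2.exists hx)
  · exact hab (mem_D_or_mem_D_of_fst hx.1.exists hy)
  · exact hcd (mem_D_or_mem_D_of_fst hx.2.exists hy)
  · exact hcorner (cornerInter_D_of_crossing hx hy hP)

lemma eq_of_D_subset {s u v : Pt} (h : D s u ⊆ D s v) (hu : D s u ∩ P = {s, u})
    (hv : D s v ∩ P = {s, v}) (hus : u ≠ s) : u = v := by
  have huv : u ∈ D s v ∩ P := ⟨h (right_mem_D s u), (hu.superset (mem_insert_of_mem s rfl)).2⟩
  rw [hv] at huv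
  exact huv.resolve_left hus

lemma eq_of_same_side {s u v : Pt} (hx : s.1 ≤ u.1 ∧ s.1 ≤ v.1 ∨ u.1 ≤ s.1 ∧ v.1 ≤ s.1)
    (hy : s.2 ≤ u.2 ∧ s.2 ≤ v.2 ∨ u.2 ≤ s.2 ∧ v.2 ≤ s.2)
    (hu : D s u ∩ P = {s, u}) (hv : D s v ∩ P = {s, v}) (hus : u ≠ s) (hvs : v ≠ s)
    (hpierce : ¬ PiercingInter (D s u) (D s v)) : u = v := by
  rcases uIcc_subset_or_supset_of_same_side hx with hx | hx <;>
    rcases uIcc_subset_or_supset_of_same_side hy with hy | hy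
  · exact eq_of_D_subset (prod_mono hx hy) hu hv hus
  · exact absurd (.inl (pierces_D_iff.2 ⟨hx, hy⟩)) hpierce
  · exact absurd (.inr (pierces_D_iff.2 ⟨hx, hy⟩)) hpierce
  · exact (eq_of_D_subset (prod_mono hx hy) hv hu hvs).symm

end Rectangles

/-- `X = D p q` is a rectangle of `𝓡₁` with lower defining point `p` and upper defining point `q`:
blue rectangles rise to the right, red ones to the left. -/
structure IsFam1Diag (R B X : Set Pt) (p q : Pt) : Prop where
  eq_D : X = D p q
  ne : p ≠ q
  inter_eq : X ∩ (R ∪ B) = {p, q}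
  snd_le : p.2 ≤ q.2
  color : p ∈ B ∧ q ∈ B ∧ p.1 ≤ q.1 ∨ p ∈ R ∧ q ∈ R ∧ q.1 ≤ p.1

lemma exists_isFam1Diag {R B X : Set Pt} (hX : X ∈ Fam1 R B) : ∃ p q, IsFam1Diag R B X p q := by
  rcases hX with ⟨p, q, hp, hq, hpq, rfl, hS, hc⟩ | ⟨p, q, hp, hq, hpq, rfl, hS, hc⟩
  · have hc' : (min p.1 q.1, min p.2 q.2) ∈ ({p, q} : Set Pt) :=
      hS ▸ ⟨⟨⟨le_rfl, min_le_max⟩, ⟨le_rfl, min_le_max⟩⟩, hc⟩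
    rcases hc' with h | h
    · exact ⟨p, q, rfl, hpq, hS, min_eq_left_iff.1 (congrArg Prod.snd h),
        .inl ⟨hp, hq, min_eq_left_iff.1 (congrArg Prod.fst h)⟩⟩
    · exact ⟨q, p, D_comm p q, hpq.symm, hS.trans (pair_comm p q),
        min_eq_right_iff.1 (congrArg Prod.snd h),
        .inl ⟨hq, hp, min_eq_right_iff.1 (congrArg Prod.fst h)⟩⟩
  · have hc' : (max p.1 q.1, min p.2 q.2) ∈ ({p, q} : Set Pt) :=
      hS ▸ ⟨⟨⟨min_le_max, le_rfl⟩, ⟨le_rfl, min_le_max⟩⟩, hc⟩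
    rcases hc' with h | h
    · exact ⟨p, q, rfl, hpq, hS, min_eq_left_iff.1 (congrArg Prod.snd h),
        .inr ⟨hp, hq, max_eq_left_iff.1 (congrArg Prod.fst h)⟩⟩
    · exact ⟨q, p, D_comm p q, hpq.symm, hS.trans (pair_comm p q),
        min_eq_right_iff.1 (congrArg Prod.snd h),
        .inr ⟨hq, hp, max_eq_right_iff.1 (congrArg Prod.fst h)⟩⟩

open Classical in
noncomputable def potential (B : Set Pt) (u : Pt) : ℝ := if u ∈ B then u.1 + u.2 else u.2 - u.1

namespace IsFam1Diag

variable {R B X Y : Set Pt} {p q p' q' : Pt}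

lemma left_mem (h : IsFam1Diag R B X p q) : p ∈ R ∪ B :=
  (h.inter_eq.superset (mem_insert p {q})).2

lemma right_mem (h : IsFam1Diag R B X p q) : q ∈ R ∪ B :=
  (h.inter_eq.superset (mem_insert_of_mem p rfl)).2

lemma D_inter_eq (h : IsFam1Diag R B X p q) : D p q ∩ (R ∪ B) = {p, q} :=
  h.eq_D ▸ h.inter_eq

lemma D_symm_inter_eq (h : IsFam1Diag R B X p q) : D q p ∩ (R ∪ B) = {q, p} := by
  rw [D_comm, pair_comm, h.D_inter_eq]

lemma potential_lt (hRB : Disjoint R B) (h : IsFam1Diag R B X p q) :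
    potential B p < potential B q := by
  have hne : p.1 ≠ q.1 ∨ p.2 ≠ q.2 := by
    by_contra! heq
    exact h.ne (Prod.ext heq.1 heq.2)
  have hy := h.snd_le
  rcases h.color with ⟨hp, hq, hx⟩ | ⟨hp, hq, hx⟩
  · simp only [potential, if_pos hp, if_pos hq]
    rcases hne with hne | hne
    · linarith [lt_of_le_of_ne hx hne]
    · linarith [lt_of_le_of_ne hy hne]
  · simp only [potential, if_neg (hRB.notMem_of_mem_left hp),
      if_neg (hRB.notMem_of_mem_left hq)]
    rcases hne with hne | hne
    · linarith [lt_of_le_of_ne hx hne.symm]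
    · linarith [lt_of_le_of_ne hy hne]

lemma eq_of_lower_eq (hRB : Disjoint R B) (hX : IsFam1Diag R B X p q)
    (hY : IsFam1Diag R B Y p q') (hpierce : ¬ PiercingInter X Y) : X = Y := by
  have hx : p.1 ≤ q.1 ∧ p.1 ≤ q'.1 ∨ q.1 ≤ p.1 ∧ q'.1 ≤ p.1 := by
    rcases hX.color with ⟨hp, -, h⟩ | ⟨hp, -, h⟩ <;>
      rcases hY.color with ⟨hp', -, h'⟩ | ⟨hp', -, h'⟩
    exacts [.inl ⟨h, h'⟩, (hRB.notMem_of_mem_left hp' hp).elim,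
      (hRB.notMem_of_mem_left hp hp').elim, .inr ⟨h, h'⟩]
  rw [hX.eq_D, hY.eq_D] at hpierce ⊢
  rw [eq_of_same_side hx (.inl ⟨hX.snd_le, hY.snd_le⟩) hX.D_inter_eq hY.D_inter_eq
    hX.ne.symm hY.ne.symm hpierce]

lemma eq_of_upper_eq (hRB : Disjoint R B) (hX : IsFam1Diag R B X p q)
    (hY : IsFam1Diag R B Y p' q) (hpierce : ¬ PiercingInter X Y) : X = Y := by
  have hx : q.1 ≤ p.1 ∧ q.1 ≤ p'.1 ∨ p.1 ≤ q.1 ∧ p'.1 ≤ q.1 := by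
    rcases hX.color with ⟨-, hq, h⟩ | ⟨-, hq, h⟩ <;>
      rcases hY.color with ⟨-, hq', h'⟩ | ⟨-, hq', h'⟩
    exacts [.inr ⟨h, h'⟩, (hRB.notMem_of_mem_left hq' hq).elim,
      (hRB.notMem_of_mem_left hq hq').elim, .inl ⟨h, h'⟩]
  rw [hX.eq_D, hY.eq_D, D_comm p, D_comm p'] at hpierce ⊢
  rw [eq_of_same_side hx (.inr ⟨hX.snd_le, hY.snd_le⟩) hX.D_symm_inter_eq hY.D_symm_inter_eq
    hX.ne hY.ne hpierce]

theorem upper_eq_lower_or (hRB : Disjoint R B) (hX : IsFam1Diag R B X p q)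
    (hY : IsFam1Diag R B Y p' q') (hne : X ≠ Y) (hinter : (X ∩ Y).Nonempty)
    (hpierce : ¬ PiercingInter X Y) (hcorner : ¬ CornerInter (R ∪ B) X Y) :
    q = p' ∨ q' = p := by
  have hsX : ∀ s ∈ X ∩ (R ∪ B), s = p ∨ s = q := fun s hs => by rwa [hX.inter_eq] at hs
  have hsY : ∀ s ∈ Y ∩ (R ∪ B), s = p' ∨ s = q' := fun s hs => by rwa [hY.inter_eq] at hs
  obtain ⟨s, hs, hs'⟩ := exists_mem_inter_D hX.left_mem hX.right_mem hY.left_mem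
    hY.right_mem (hX.eq_D ▸ hY.eq_D ▸ hinter) (hX.eq_D ▸ hY.eq_D ▸ hpierce)
    (hX.eq_D ▸ hY.eq_D ▸ hcorner)
  rw [← hX.eq_D, ← hY.eq_D] at hs'
  rcases hsX s ⟨hs'.1, hs⟩ with rfl | rfl <;> rcases hsY s ⟨hs'.2, hs⟩ with h | h
  · exact absurd (eq_of_lower_eq hRB hX (h ▸ hY) hpierce) hne
  · exact .inr h.symm
  · exact .inl h
  · exact absurd (eq_of_upper_eq hRB hX (h ▸ hY) hpierce) hne

end IsFam1Diag

theorem stmt7_general (R B : Set Pt) (hdisj : R ∩ B = ∅)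
    (H : Set (Set Pt)) (hH : H ⊆ Fam1 R B)
    (hnoadj : H.Pairwise fun A A' =>
      ¬ PiercingInter A A' ∧ ¬ CornerInter (R ∪ B) A A') :
    (interGraph H).IsAcyclic := by
  have hRB : Disjoint R B := disjoint_iff_inter_eq_empty.2 hdisj
  choose p q hdiag using fun X : H => exists_isFam1Diag (hH X.2)
  have hlink : ∀ ⦃X Y : H⦄, (interGraph H).Adj X Y → q X = p Y ∨ q Y = p X := by
    rintro X Y ⟨hne, hinter⟩
    have hne' : (X : Set Pt) ≠ Y := Subtype.coe_injective.ne hne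
    exact (hdiag X).upper_eq_lower_or hRB (hdiag Y) hne' hinter (hnoadj X.2 Y.2 hne').1
      (hnoadj X.2 Y.2 hne').2
  have hlt : ∀ ⦃X Y : H⦄, q X = p Y → potential B (p X) < potential B (p Y) :=
    fun X _ h => h ▸ (hdiag X).potential_lt hRB
  refine SimpleGraph.isAcyclic_of_lower_neighbor_unique (fun X => potential B (p X)) ?_ ?_
  · intro X Y hXY
    rcases hlink hXY with h | h
    exacts [(hlt h).ne, (hlt h).ne']
  · intro X Y Z hXY hXZ hY hZ
    have hqY : q Y = p X := (hlink hXY).resolve_left fun h => (hlt h).not_gt hY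
    have hqZ : q Z = p X := (hlink hXZ).resolve_left fun h => (hlt h).not_gt hZ
    by_contra hYZ
    have hYZ' : (Y : Set Pt) ≠ Z := Subtype.coe_injective.ne hYZ
    exact hYZ' ((hdiag Y).eq_of_upper_eq hRB (hqZ.trans hqY.symm ▸ hdiag Z)
      (hnoadj Y.2 Z.2 hYZ').1)

/-- If no two elements of `H ⊆ 𝓡₁` have a piercing or a corner
intersection, then the intersection graph of `H` is acyclic. -/
theorem stmt7 (R B : Set Pt) (hfin : (R ∪ B).Finite) (hdisj : R ∩ B = ∅)
    (H : Set (Set Pt)) (hH : H ⊆ Fam1 R B)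
    (hnoadj : H.Pairwise fun A A' =>
      ¬ PiercingInter A A' ∧ ¬ CornerInter (R ∪ B) A A') :
    (interGraph H).IsAcyclic :=
  stmt7_general R B hdisj H hH hnoadj
end
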